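/- arXiv:2604.04985 — 3 statements merged into one kernel-verified Lean document; each statement's English description precedes it below -/
import Mathlib

section
/- Let F ∈ {S, R, T}, let G be a finite connected simple graph with at least one edge, and let H be any finite dispersable bipartite graph (H is bipartite and mbt(H) = Δ(H)). If F(G) is dispersable (mbt(F(G)) = Δ(F(G))), then G +_F H is dispersable, i.e., mbt(G +_F H) = Δ(G +_F H). -/
open SimpleGraph

/-- Degree of a vertex. -/
noncomputable def deg {V : Type*} (G : SimpleGraph V) (v : V) : ℕ :=
  (G.neighborSet v).ncard

/-- Maximum degree Δ(G) of a finite simple graph. -/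
noncomputable def maxDeg {V : Type*} [Fintype V] (G : SimpleGraph V) : ℕ :=
  Finset.univ.sup (deg G)

/-- `IsMBE G k f page` : the linear order on vertices given by the injection `f : V → ℕ`
together with the page assignment `page` is a matching book embedding of `G` on `k` pages:
every edge gets a page `< k`, no two edges on a common page cross, and every vertex is
incident to at most one edge on each page. -/
def IsMBE {V : Type*} (G : SimpleGraph V) (k : ℕ) (f : V → ℕ) (page : Sym2 V → ℕ) : Prop :=
  Function.Injective f ∧
  (∀ u v, G.Adj u v → page s(u, v) < k) ∧
  (∀ u v x y, G.Adj u v → G.Adj x y → page s(u, v) = page s(x, y) →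
    ¬(f u < f x ∧ f x < f v ∧ f v < f y)) ∧
  (∀ u v w, G.Adj u v → G.Adj u w → v ≠ w → page s(u, v) ≠ page s(u, w))

/-- The matching book thickness of `G`: the least number of pages admitting a
matching book embedding. -/
noncomputable def mbt {V : Type*} (G : SimpleGraph V) : ℕ :=
  sInf {k | ∃ f page, IsMBE G k f page}

/-- A graph is outerplanar iff it has a one-page book embedding: a linear order of
its vertices (an injection into `ℕ`) in which no two edges cross. -/
def IsOuterplanar {V : Type*} (G : SimpleGraph V) : Prop :=
  ∃ f : V → ℕ, Function.Injective f ∧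
    ∀ u v x y, G.Adj u v → G.Adj x y → ¬(f u < f x ∧ f x < f v ∧ f v < f y)

/-- The derived graph of `G` on vertex set `V(G) ⊕ E(G)`. Black–white edges
(`u`–`(uv)` for `u` an endpoint of the edge `uv`) are always present; `black` indicates
whether the original edges of `G` are retained, and `white` indicates whether two edge
vertices corresponding to adjacent edges of `G` (distinct edges sharing an endpoint)
are joined. -/
def derivedG {V : Type*} (G : SimpleGraph V) (black white : Bool) :
    SimpleGraph (V ⊕ G.edgeSet) where
  Adj x y :=
    match x, y with
    | Sum.inl u, Sum.inl v => black = true ∧ G.Adj u v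
    | Sum.inl u, Sum.inr e => u ∈ (e : Sym2 V)
    | Sum.inr e, Sum.inl u => u ∈ (e : Sym2 V)
    | Sum.inr e, Sum.inr f =>
        white = true ∧ e ≠ f ∧ ∃ w, w ∈ (e : Sym2 V) ∧ w ∈ (f : Sym2 V)
  symm := by
    constructor
    rintro (u | e) (v | f) h
    · exact ⟨h.1, h.2.symm⟩
    · exact h
    · exact h
    · obtain ⟨hw, hne, w, h1, h2⟩ := h
      exact ⟨hw, hne.symm, w, h2, h1⟩
  loopless := by
    constructor
    rintro (u | e) h
    · exact G.loopless.irrefl u h.2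
    · exact h.2.1 rfl

/-- The four graph operations `S`, `R`, `Q`, `T`. -/
inductive FOp : Type
  | S | R | Q | T
  deriving DecidableEq

/-- Whether the operation retains the original (black–black) edges of `G`. -/
def FOp.black : FOp → Bool
  | .R => true
  | .T => true
  | _ => false

/-- Whether the operation joins edge (white) vertices of adjacent edges. -/
def FOp.white : FOp → Bool
  | .Q => true
  | .T => true
  | _ => false

/-- `FGraph F G` is the graph `F(G)` for `F ∈ {S, R, Q, T}`. -/
def FGraph (F : FOp) {V : Type*} (G : SimpleGraph V) : SimpleGraph (V ⊕ G.edgeSet) :=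
  derivedG G F.black F.white

/-- The `F`-sum `G +_F H`: vertex set `(V(G) ∪ E(G)) × V(H)`; `(u₁, u₂)` and `(v₁, v₂)`
are adjacent iff `u₁ = v₁ ∈ V(G)` and `u₂v₂ ∈ E(H)`, or `u₂ = v₂` and
`u₁v₁ ∈ E(F(G))`. -/
def FSum (F : FOp) {V W : Type*} (G : SimpleGraph V) (H : SimpleGraph W) :
    SimpleGraph ((V ⊕ G.edgeSet) × W) where
  Adj x y :=
    (x.1 = y.1 ∧ (∃ u : V, x.1 = Sum.inl u) ∧ H.Adj x.2 y.2) ∨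
    (x.2 = y.2 ∧ (FGraph F G).Adj x.1 y.1)
  symm := by
    constructor
    rintro ⟨a, b⟩ ⟨c, d⟩ (⟨h1, h2, h3⟩ | ⟨h1, h2⟩)
    · exact Or.inl ⟨h1.symm, h1 ▸ h2, h3.symm⟩
    · exact Or.inr ⟨h1.symm, h2.symm⟩
  loopless := by
    constructor
    rintro ⟨a, b⟩ (⟨-, -, h⟩ | ⟨-, h⟩)
    · exact H.loopless.irrefl b h
    · exact (FGraph F G).loopless.irrefl a h

/-- The path graph `P_n` on `n` vertices. -/
def pathG (n : ℕ) : SimpleGraph (Fin n) where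
  Adj i j := (i : ℕ) + 1 = (j : ℕ) ∨ (j : ℕ) + 1 = (i : ℕ)
  symm := by constructor; intro i j h; tauto
  loopless := by constructor; intro i h; omega

instance (n : ℕ) : DecidableRel (pathG n).Adj := fun i j =>
  inferInstanceAs (Decidable (_ ∨ _))

/-- The cycle graph `C_n` on `n` vertices (intended for `n ≥ 3`). -/
def cycleG (n : ℕ) : SimpleGraph (Fin n) where
  Adj i j := i ≠ j ∧ (((i : ℕ) + 1) % n = (j : ℕ) ∨ ((j : ℕ) + 1) % n = (i : ℕ))
  symm := by constructor; intro i j h; tauto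
  loopless := by constructor; intro i h; exact h.1 rfl

instance (n : ℕ) : DecidableRel (cycleG n).Adj := fun i j =>
  inferInstanceAs (Decidable (_ ∧ _))

/-- The star graph `S_n = K_{1,n}` on `n + 1` vertices: vertex `0` is the center. -/
def starG (n : ℕ) : SimpleGraph (Fin (n + 1)) where
  Adj i j := i ≠ j ∧ (i = 0 ∨ j = 0)
  symm := by constructor; intro i j h; tauto
  loopless := by constructor; intro i h; exact h.1 rfl

instance (n : ℕ) : DecidableRel (starG n).Adj := fun i j =>
  inferInstanceAs (Decidable (_ ∧ _))

/-- The circulant graph `C(ℤ_m, {1, 2})`: vertices `0, …, m - 1`, with `i` adjacent to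
`j` iff `i - j ≡ ±1` or `±2 (mod m)`. -/
def circulantG12 (m : ℕ) : SimpleGraph (Fin m) where
  Adj i j := i ≠ j ∧
    (((i : ℕ) + 1) % m = (j : ℕ) ∨ ((i : ℕ) + 2) % m = (j : ℕ) ∨
     ((j : ℕ) + 1) % m = (i : ℕ) ∨ ((j : ℕ) + 2) % m = (i : ℕ))
  symm := by constructor; intro i j h; tauto
  loopless := by constructor; intro i h; exact h.1 rfl



section MBEHelpers

variable {X : Type*}

private lemma mbe_mul_add_lt {N a c r : ℕ} (hr : r < N) (h : a < c) (r' : ℕ) :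
    a * N + r < c * N + r' := by
  have h1 : a * N + r < (a + 1) * N := by
    rw [add_mul, one_mul]; omega
  have h2 : (a + 1) * N ≤ c * N := Nat.mul_le_mul_right N h
  omega

private lemma mbe_le_of_mul_add_lt {N a c r r' : ℕ} (hr' : r' < N)
    (h : a * N + r < c * N + r') : a ≤ c := by
  by_contra hc
  push_neg at hc
  exact absurd (mbe_mul_add_lt hr' hc r) (by omega)

private lemma mbe_eq_of_mul_add_eq {N a c r r' : ℕ} (hr : r < N) (hr' : r' < N)
    (h : a * N + r = c * N + r') : a = c ∧ r = r' := by
  rcases lt_trichotomy a c with h1 | h1 | h1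
  · exact absurd (mbe_mul_add_lt hr h1 r') (by omega)
  · subst h1
    exact ⟨rfl, Nat.add_left_cancel h⟩
  · exact absurd (mbe_mul_add_lt hr' h1 r) (by omega)

lemma exists_isMBE [Fintype X] (G : SimpleGraph X) : ∃ k f page, IsMBE G k f page := by
  classical
  refine ⟨Fintype.card (Sym2 X), fun x => ((Fintype.equivFin X) x : ℕ),
    fun e => ((Fintype.equivFin (Sym2 X)) e : ℕ), ?_, ?_, ?_, ?_⟩
  · intro x y h
    exact (Fintype.equivFin X).injective (Fin.val_injective h)
  · intro u v _
    exact Fin.is_lt _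
  · intro u v x y huv hxy hp hpat
    have hs : s(u, v) = s(x, y) := (Fintype.equivFin (Sym2 X)).injective (Fin.val_injective hp)
    obtain ⟨h1, h2, h3⟩ := hpat
    rcases Sym2.eq_iff.mp hs with ⟨rfl, rfl⟩ | ⟨rfl, rfl⟩
    · exact absurd h1 (lt_irrefl _)
    · omega
  · intro u v w _ _ hvw hp
    have hs : s(u, v) = s(u, w) := (Fintype.equivFin (Sym2 X)).injective (Fin.val_injective hp)
    exact hvw (Sym2.congr_right.mp hs)

lemma mbtSet_nonempty [Fintype X] (G : SimpleGraph X) :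
    {k | ∃ f page, IsMBE G k f page}.Nonempty := by
  obtain ⟨k, f, p, h⟩ := exists_isMBE G
  exact ⟨k, f, p, h⟩

lemma exists_isMBE_mbt [Fintype X] (G : SimpleGraph X) :
    ∃ f page, IsMBE G (mbt G) f page :=
  Nat.sInf_mem (mbtSet_nonempty G)

lemma mbt_le_of_isMBE (G : SimpleGraph X) {k : ℕ} {f : X → ℕ} {page : Sym2 X → ℕ}
    (h : IsMBE G k f page) : mbt G ≤ k :=
  Nat.sInf_le ⟨f, page, h⟩

lemma deg_le_of_isMBE (G : SimpleGraph X) [Finite X] {k : ℕ} {f : X → ℕ} {page : Sym2 X → ℕ}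
    (h : IsMBE G k f page) (v : X) : deg G v ≤ k := by
  obtain ⟨hinj, hlt, hcross, hmatch⟩ := h
  have hmap : ∀ x ∈ G.neighborSet v, page s(v, x) ∈ Set.Iio k := fun x hx => hlt v x hx
  have hinj' : Set.InjOn (fun x => page s(v, x)) (G.neighborSet v) := by
    intro x hx y hy hxy
    by_contra hne
    exact hmatch v x y hx hy hne hxy
  have hIio : (Set.Iio k) = (↑(Finset.range k) : Set ℕ) := by
    ext n; simp
  calc deg G v = (G.neighborSet v).ncard := rfl
    _ ≤ (Set.Iio k).ncard := Set.ncard_le_ncard_of_injOn _ hmap hinj' (Set.finite_Iio k)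
    _ = k := by rw [hIio, Set.ncard_coe_finset, Finset.card_range]

lemma maxDeg_le_mbt [Fintype X] (G : SimpleGraph X) : maxDeg G ≤ mbt G := by
  obtain ⟨f, p, h⟩ := exists_isMBE_mbt G
  exact Finset.sup_le fun v _ => deg_le_of_isMBE G h v

end MBEHelpers

section DegreeHelpers

variable {V W : Type*}

lemma deg_def (G : SimpleGraph V) (v : V) : deg G v = (G.neighborSet v).ncard := rfl

lemma derivedG_adj_il_ir {G : SimpleGraph V} {bk wt : Bool} {u : V} {e : G.edgeSet} :
    (derivedG G bk wt).Adj (Sum.inl u) (Sum.inr e) ↔ u ∈ (e : Sym2 V) := Iff.rfl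

lemma derivedG_adj_ir_il {G : SimpleGraph V} {bk wt : Bool} {u : V} {e : G.edgeSet} :
    (derivedG G bk wt).Adj (Sum.inr e) (Sum.inl u) ↔ u ∈ (e : Sym2 V) := Iff.rfl

lemma derivedG_adj_il_il {G : SimpleGraph V} {bk wt : Bool} {u v : V} :
    (derivedG G bk wt).Adj (Sum.inl u) (Sum.inl v) ↔ (bk = true ∧ G.Adj u v) := Iff.rfl

lemma derivedG_adj_ir_ir {G : SimpleGraph V} {bk wt : Bool} {e f : G.edgeSet} :
    (derivedG G bk wt).Adj (Sum.inr e) (Sum.inr f) ↔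
      (wt = true ∧ e ≠ f ∧ ∃ w, w ∈ (e : Sym2 V) ∧ w ∈ (f : Sym2 V)) := Iff.rfl

/-- The set of edges incident to `x` has cardinality `deg G x`. -/
lemma ncard_incident [Finite V] (G : SimpleGraph V) (x : V) :
    {f : G.edgeSet | x ∈ (f : Sym2 V)}.ncard = deg G x := by
  classical
  have h1 : (Subtype.val '' {f : G.edgeSet | x ∈ (f : Sym2 V)}) =
      (fun v => s(x, v)) '' G.neighborSet x := by
    ext e
    simp only [Set.mem_image, Set.mem_setOf_eq]
    constructor
    · rintro ⟨⟨e, he⟩, hx, rfl⟩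
      simp only at hx
      refine ⟨Sym2.Mem.other hx, ?_, Sym2.other_spec hx⟩
      have he' := he
      rw [← Sym2.other_spec hx] at he'
      exact (G.mem_edgeSet).mp he'
    · rintro ⟨v, hv, rfl⟩
      exact ⟨⟨s(x, v), (G.mem_edgeSet).mpr hv⟩, Sym2.mem_iff.mpr (Or.inl rfl), rfl⟩
  have h2 : Function.Injective (fun v : V => s(x, v)) := fun v v' h => Sym2.congr_right.mp h
  calc {f : G.edgeSet | x ∈ (f : Sym2 V)}.ncard
      = (Subtype.val '' {f : G.edgeSet | x ∈ (f : Sym2 V)}).ncard :=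
        (Set.ncard_image_of_injective _ Subtype.val_injective).symm
    _ = ((fun v => s(x, v)) '' G.neighborSet x).ncard := by rw [h1]
    _ = deg G x := Set.ncard_image_of_injective _ h2

/-- `S`-type: exact degree of an original vertex. -/
lemma deg_derivedG_inl_S [Finite V] (G : SimpleGraph V) (wt : Bool) (u : V) :
    deg (derivedG G false wt) (Sum.inl u) = deg G u := by
  classical
  have h1 : (derivedG G false wt).neighborSet (Sum.inl u) =
      Sum.inr '' {f : G.edgeSet | u ∈ (f : Sym2 V)} := by
    ext x
    cases x with
    | inl v =>
      simp only [mem_neighborSet, derivedG_adj_il_il, Set.mem_image]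
      constructor
      · rintro ⟨h, -⟩; exact absurd h (by simp)
      · rintro ⟨e, -, h⟩; exact absurd h (by simp)
    | inr e =>
      simp only [mem_neighborSet, derivedG_adj_il_ir, Set.mem_image]
      constructor
      · intro h; exact ⟨e, h, rfl⟩
      · rintro ⟨e', he', heq⟩
        obtain rfl : e' = e := by injection heq
        exact he'
  show ((derivedG G false wt).neighborSet (Sum.inl u)).ncard = deg G u
  rw [h1, Set.ncard_image_of_injective _ Sum.inr_injective, ncard_incident]

/-- black=true: lower bound on the degree of an original vertex. -/
lemma deg_derivedG_inl_ge [Finite V] (G : SimpleGraph V) (wt : Bool) (u : V) :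
    deg G u + deg G u ≤ deg (derivedG G true wt) (Sum.inl u) := by
  classical
  have h1 : (Sum.inl '' G.neighborSet u) ∪ (Sum.inr '' {f : G.edgeSet | u ∈ (f : Sym2 V)})
      ⊆ (derivedG G true wt).neighborSet (Sum.inl u) := by
    rintro x (⟨v, hv, rfl⟩ | ⟨e, he, rfl⟩)
    · exact ⟨rfl, hv⟩
    · exact he
  have hd : Disjoint (Sum.inl '' G.neighborSet u)
      (Sum.inr '' {f : G.edgeSet | u ∈ (f : Sym2 V)}) := by
    rw [Set.disjoint_left]
    rintro x ⟨v, -, rfl⟩ ⟨e, -, h⟩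
    exact absurd h (by simp)
  calc deg G u + deg G u
      = (Sum.inl '' G.neighborSet u).ncard +
        (Sum.inr '' {f : G.edgeSet | u ∈ (f : Sym2 V)}).ncard := by
        rw [Set.ncard_image_of_injective _ Sum.inl_injective,
          Set.ncard_image_of_injective _ Sum.inr_injective, ncard_incident, deg_def]
    _ = ((Sum.inl '' G.neighborSet u) ∪
        (Sum.inr '' {f : G.edgeSet | u ∈ (f : Sym2 V)})).ncard :=
        (Set.ncard_union_eq hd (Set.toFinite _) (Set.toFinite _)).symm
    _ ≤ deg (derivedG G true wt) (Sum.inl u) := Set.ncard_le_ncard h1 (Set.toFinite _)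

/-- white=false: exact degree 2 of an edge vertex. -/
lemma deg_derivedG_inr_eq [Finite V] (G : SimpleGraph V) (bk : Bool) (e : G.edgeSet) :
    deg (derivedG G bk false) (Sum.inr e) = 2 := by
  classical
  obtain ⟨e, he⟩ := e
  induction e using Sym2.ind with
  | _ x y =>
    have hxy : G.Adj x y := (G.mem_edgeSet).mp he
    have h1 : (derivedG G bk false).neighborSet (Sum.inr ⟨s(x,y), he⟩) =
        {Sum.inl x, Sum.inl y} := by
      ext z
      cases z with
      | inl v =>
        simp only [mem_neighborSet, derivedG_adj_ir_il, Set.mem_insert_iff,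
          Set.mem_singleton_iff]
        rw [Sym2.mem_iff]
        constructor
        · rintro (rfl | rfl); exacts [Or.inl rfl, Or.inr rfl]
        · rintro (h | h) <;> injection h with h <;> subst h
          exacts [Or.inl rfl, Or.inr rfl]
      | inr f =>
        simp only [mem_neighborSet, derivedG_adj_ir_ir, Set.mem_insert_iff,
          Set.mem_singleton_iff]
        constructor
        · rintro ⟨h, -⟩; exact absurd h (by simp)
        · rintro (h | h) <;> exact absurd h (by simp)
    show ((derivedG G bk false).neighborSet _).ncard = 2
    rw [h1, Set.ncard_pair (by simpa using hxy.ne)]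

/-- Degree upper bound for an edge vertex in any derived graph. -/
lemma deg_derivedG_inr_le [Finite V] (G : SimpleGraph V) (bk wt : Bool) (x y : V)
    (hxy : G.Adj x y) (e : G.edgeSet) (he : (e : Sym2 V) = s(x, y)) :
    deg (derivedG G bk wt) (Sum.inr e) ≤ deg G x + deg G y := by
  classical
  have hdx : 1 ≤ deg G x := by
    rw [deg_def]; exact (Set.ncard_pos (Set.toFinite _)).mpr ⟨y, hxy⟩
  have hdy : 1 ≤ deg G y := by
    rw [deg_def]; exact (Set.ncard_pos (Set.toFinite _)).mpr ⟨x, hxy.symm⟩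
  have hxe : e ∈ {f : G.edgeSet | x ∈ (f : Sym2 V)} := by
    show x ∈ (e : Sym2 V); rw [he]; exact Sym2.mem_iff.mpr (Or.inl rfl)
  have hye : e ∈ {f : G.edgeSet | y ∈ (f : Sym2 V)} := by
    show y ∈ (e : Sym2 V); rw [he]; exact Sym2.mem_iff.mpr (Or.inr rfl)
  have h1 : (derivedG G bk wt).neighborSet (Sum.inr e) ⊆
      ({Sum.inl x, Sum.inl y} : Set (V ⊕ G.edgeSet)) ∪
      (Sum.inr '' ({f : G.edgeSet | x ∈ (f : Sym2 V)} \ {e})) ∪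
      (Sum.inr '' ({f : G.edgeSet | y ∈ (f : Sym2 V)} \ {e})) := by
    intro z hz
    cases z with
    | inl v =>
      have hv : v ∈ (e : Sym2 V) := hz
      rw [he, Sym2.mem_iff] at hv
      rcases hv with rfl | rfl
      · exact Or.inl (Or.inl (Or.inl rfl))
      · exact Or.inl (Or.inl (Or.inr rfl))
    | inr f =>
      obtain ⟨-, hne, w', hw'e, hw'f⟩ := hz
      rw [he, Sym2.mem_iff] at hw'e
      rcases hw'e with rfl | rfl
      · exact Or.inl (Or.inr ⟨f, ⟨hw'f, fun h => hne (by rw [h])⟩, rfl⟩)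
      · exact Or.inr ⟨f, ⟨hw'f, fun h => hne (by rw [h])⟩, rfl⟩
  have e1 : (({Sum.inl x, Sum.inl y} : Set (V ⊕ G.edgeSet))).ncard ≤ 2 := by
    apply (Set.ncard_insert_le _ _).trans
    simp [Set.ncard_singleton]
  have e2 : ((Sum.inr : G.edgeSet → V ⊕ G.edgeSet) '' ({f : G.edgeSet | x ∈ (f : Sym2 V)} \ {e})).ncard =
      deg G x - 1 := by
    rw [Set.ncard_image_of_injective _ Sum.inr_injective,
      Set.ncard_diff_singleton_of_mem hxe, ncard_incident]
  have e3 : ((Sum.inr : G.edgeSet → V ⊕ G.edgeSet) '' ({f : G.edgeSet | y ∈ (f : Sym2 V)} \ {e})).ncard =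
      deg G y - 1 := by
    rw [Set.ncard_image_of_injective _ Sum.inr_injective,
      Set.ncard_diff_singleton_of_mem hye, ncard_incident]
  have u1 := Set.ncard_union_le (({Sum.inl x, Sum.inl y} : Set (V ⊕ G.edgeSet)) ∪
      ((Sum.inr : G.edgeSet → V ⊕ G.edgeSet) '' ({f : G.edgeSet | x ∈ (f : Sym2 V)} \ {e})))
      ((Sum.inr : G.edgeSet → V ⊕ G.edgeSet) '' ({f : G.edgeSet | y ∈ (f : Sym2 V)} \ {e}))
  have u2 := Set.ncard_union_le ({Sum.inl x, Sum.inl y} : Set (V ⊕ G.edgeSet))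
      ((Sum.inr : G.edgeSet → V ⊕ G.edgeSet) '' ({f : G.edgeSet | x ∈ (f : Sym2 V)} \ {e}))
  have h2 : (({Sum.inl x, Sum.inl y} : Set (V ⊕ G.edgeSet)) ∪
      (Sum.inr '' ({f : G.edgeSet | x ∈ (f : Sym2 V)} \ {e})) ∪
      (Sum.inr '' ({f : G.edgeSet | y ∈ (f : Sym2 V)} \ {e}))).ncard ≤
      2 + (deg G x - 1) + (deg G y - 1) := by omega
  have h3 := (Set.ncard_le_ncard h1 (Set.toFinite _)).trans h2
  show ((derivedG G bk wt).neighborSet (Sum.inr e)).ncard ≤ _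
  omega

/-- Lower bound: degree in the F-sum dominated by degree in `F(G)`. -/
lemma deg_fsum_fst [Finite V] [Finite W] (F : FOp) (G : SimpleGraph V) (H : SimpleGraph W)
    (p : V ⊕ G.edgeSet) (w : W) :
    deg (FGraph F G) p ≤ deg (FSum F G H) (p, w) := by
  classical
  have h1 : (fun x => (x, w)) '' (FGraph F G).neighborSet p ⊆
      (FSum F G H).neighborSet (p, w) := by
    rintro z ⟨x, hx, rfl⟩
    exact Or.inr ⟨rfl, hx⟩
  calc deg (FGraph F G) p
      = ((fun x => (x, w)) '' (FGraph F G).neighborSet p).ncard :=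
        (Set.ncard_image_of_injective _ (fun a b h => by injection h)).symm
    _ ≤ deg (FSum F G H) (p, w) := Set.ncard_le_ncard h1 (Set.toFinite _)

/-- Lower bound for original-vertex columns. -/
lemma deg_fsum_inl [Finite V] [Finite W] (F : FOp) (G : SimpleGraph V) (H : SimpleGraph W)
    (u : V) (w : W) :
    deg (FGraph F G) (Sum.inl u) + deg H w ≤ deg (FSum F G H) (Sum.inl u, w) := by
  classical
  set S1 : Set ((V ⊕ G.edgeSet) × W) := (fun x => (x, w)) '' (FGraph F G).neighborSet (Sum.inl u)
  set S2 : Set ((V ⊕ G.edgeSet) × W) := (fun w' => (Sum.inl u, w')) '' H.neighborSet w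
  have h1 : S1 ∪ S2 ⊆ (FSum F G H).neighborSet (Sum.inl u, w) := by
    rintro z (⟨x, hx, rfl⟩ | ⟨w', hw', rfl⟩)
    · exact Or.inr ⟨rfl, hx⟩
    · exact Or.inl ⟨rfl, ⟨u, rfl⟩, hw'⟩
  have hd : Disjoint S1 S2 := by
    rw [Set.disjoint_left]
    rintro z ⟨x, hx, rfl⟩ ⟨w', hw', heq⟩
    have : w' = w := (Prod.ext_iff.mp heq).2
    exact H.irrefl (this ▸ hw')
  have e1 : S1.ncard = deg (FGraph F G) (Sum.inl u) :=
    Set.ncard_image_of_injective _ (fun a b h => by injection h)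
  have e2 : S2.ncard = deg H w :=
    Set.ncard_image_of_injective _ (fun a b h => by injection h with h1 h2)
  calc deg (FGraph F G) (Sum.inl u) + deg H w = S1.ncard + S2.ncard := by rw [e1, e2]
    _ = (S1 ∪ S2).ncard := (Set.ncard_union_eq hd (Set.toFinite _) (Set.toFinite _)).symm
    _ ≤ _ := Set.ncard_le_ncard h1 (Set.toFinite _)

end DegreeHelpers

section MainConstruction

/-- The general block construction: given matching book embeddings of `F(G)` on `A` pages
and of `H` on `dH` pages, and a proper 2-coloring of `H`, the `F`-sum has a matching book
embedding on `A + dH` pages. -/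
lemma fsum_main_construction {V W : Type*} [Fintype V] [Fintype W] (F : FOp)
    (G : SimpleGraph V) [Fintype G.edgeSet] (H : SimpleGraph W)
    {A dH : ℕ} {f₁ : V ⊕ G.edgeSet → ℕ} {pg₁ : Sym2 (V ⊕ G.edgeSet) → ℕ}
    (h₁ : IsMBE (FGraph F G) A f₁ pg₁)
    {f₂ : W → ℕ} {pg₂ : Sym2 W → ℕ} (h₂ : IsMBE H dH f₂ pg₂)
    (C : H.Coloring (Fin 2)) :
    ∃ f page, IsMBE (FSum F G H) (A + dH) f page := by
  classical
  obtain ⟨hinj₁, hlt₁, hcross₁, hmatch₁⟩ := h₁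
  obtain ⟨hinj₂, hlt₂, hcross₂, hmatch₂⟩ := h₂
  set N : ℕ := Finset.univ.sup f₁ + 1 with hNdef
  have hfN : ∀ x, f₁ x < N := fun x => Nat.lt_succ_of_le (Finset.le_sup (Finset.mem_univ x))
  set r : W → (V ⊕ G.edgeSet) → ℕ :=
    fun w x => if C w = 0 then f₁ x else N - 1 - f₁ x with hrdef
  have hrN : ∀ w x, r w x < N := by
    intro w x
    have h1 := hfN x
    have h2 : 0 < N := by omega
    simp only [hrdef]
    split <;> omega
  have hrinj : ∀ w x x', r w x = r w x' → x = x' := by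
    intro w x x' h
    have h1 := hfN x
    have h2 := hfN x'
    apply hinj₁
    simp only [hrdef] at h
    split at h <;> omega
  have hrlt : ∀ w x x', r w x < r w x' ↔
      (if C w = 0 then f₁ x < f₁ x' else f₁ x' < f₁ x) := by
    intro w x x'
    have h1 := hfN x
    have h2 := hfN x'
    simp only [hrdef]
    split <;> constructor <;> omega
  have hfin2 : ∀ i : Fin 2, i = 0 ∨ i = 1 := by decide
  set pos : (V ⊕ G.edgeSet) × W → ℕ := fun z => f₂ z.2 * N + r z.2 z.1 with hposdef
  have hPsymm : ∀ x y : (V ⊕ G.edgeSet) × W,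
      (if x.2 = y.2 then pg₁ s(x.1, y.1) else A + pg₂ s(x.2, y.2)) =
      (if y.2 = x.2 then pg₁ s(y.1, x.1) else A + pg₂ s(y.2, x.2)) := by
    intro x y
    by_cases h : x.2 = y.2
    · rw [if_pos h, if_pos h.symm, Sym2.eq_swap]
    · rw [if_neg h, if_neg (fun hh => h hh.symm), Sym2.eq_swap]
  refine ⟨pos, Sym2.lift ⟨fun x y =>
      if x.2 = y.2 then pg₁ s(x.1, y.1) else A + pg₂ s(x.2, y.2), hPsymm⟩, ?_, ?_, ?_, ?_⟩
  · -- injectivity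
    intro z z' h
    simp only [hposdef] at h
    obtain ⟨hb, hr⟩ := mbe_eq_of_mul_add_eq (hrN _ _) (hrN _ _) h
    have hw : z.2 = z'.2 := hinj₂ hb
    rw [hw] at hr
    exact Prod.ext (hrinj _ _ _ hr) hw
  · -- page bound
    rintro u v (⟨h1, -, h3⟩ | ⟨h1, h2⟩)
    · rw [Sym2.lift_mk]
      dsimp only
      rw [if_neg h3.ne]
      exact Nat.add_lt_add_left (hlt₂ _ _ h3) A
    · rw [Sym2.lift_mk]
      dsimp only
      rw [if_pos h1]
      exact (hlt₁ _ _ h2).trans_le (Nat.le_add_right _ _)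
  · -- crossing
    rintro u v x y hadj1 hadj2 hpage ⟨hp1, hp2, hp3⟩
    rw [Sym2.lift_mk, Sym2.lift_mk] at hpage
    dsimp only at hpage
    simp only [hposdef] at hp1 hp2 hp3
    rcases hadj1 with ⟨e11, -, e13⟩ | ⟨e11, e12⟩ <;> rcases hadj2 with ⟨e21, -, e23⟩ | ⟨e21, e22⟩
    · -- H,H
      rw [if_neg e13.ne, if_neg e23.ne] at hpage
      have hpg : pg₂ s(u.2, v.2) = pg₂ s(x.2, y.2) := by omega
      have c1 : f₂ u.2 ≤ f₂ x.2 := mbe_le_of_mul_add_lt (hrN _ _) hp1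
      have c2 : f₂ x.2 ≤ f₂ v.2 := mbe_le_of_mul_add_lt (hrN _ _) hp2
      have c3 : f₂ v.2 ≤ f₂ y.2 := mbe_le_of_mul_add_lt (hrN _ _) hp3
      rcases c1.lt_or_eq with c1' | c1'
      · rcases c2.lt_or_eq with c2' | c2'
        · rcases c3.lt_or_eq with c3' | c3'
          · exact hcross₂ _ _ _ _ e13 e23 hpg ⟨c1', c2', c3'⟩
          · have hv : v.2 = y.2 := hinj₂ c3'
            have hux : u.2 ≠ x.2 := fun h => by rw [h] at c1'; omega
            refine hmatch₂ v.2 u.2 x.2 e13.symm (by rw [hv]; exact e23.symm) hux ?_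
            rw [show s(v.2, u.2) = s(u.2, v.2) from Sym2.eq_swap, hpg, ← hv, Sym2.eq_swap]
        · have hx : x.2 = v.2 := hinj₂ c2'
          by_cases huy : u.2 = y.2
          · have hc3 := c3
            rw [← huy] at hc3
            rw [← hx] at hc3
            omega
          · refine hmatch₂ v.2 u.2 y.2 e13.symm (by rw [← hx]; exact e23) huy ?_
            rw [show s(v.2, u.2) = s(u.2, v.2) from Sym2.eq_swap, hpg, ← hx]
      · have hu : u.2 = x.2 := hinj₂ c1'
        have hruv : r u.2 u.1 < r u.2 x.1 := by
          rw [← hu] at hp1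
          exact Nat.lt_of_add_lt_add_left hp1
        by_cases hvy : v.2 = y.2
        · have hrvy : r v.2 v.1 < r v.2 y.1 := by
            rw [← hvy] at hp3
            exact Nat.lt_of_add_lt_add_left hp3
          rw [← e11] at hrvy
          rw [← e21] at hrvy
          have hcol : C u.2 ≠ C v.2 := C.valid e13
          rw [hrlt] at hruv hrvy
          by_cases h0 : C u.2 = 0
          · rw [if_pos h0] at hruv
            have h0' : ¬ C v.2 = 0 := fun hh => hcol (h0.trans hh.symm)
            rw [if_neg h0'] at hrvy
            omega
          · rw [if_neg h0] at hruv
            have h0' : C v.2 = 0 := by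
              rcases hfin2 (C v.2) with h | h
              · exact h
              · rcases hfin2 (C u.2) with h' | h'
                · exact absurd h' h0
                · exact absurd (h'.trans h.symm) hcol
            rw [if_pos h0'] at hrvy
            omega
        · refine hmatch₂ u.2 v.2 y.2 e13 (by rw [hu]; exact e23) hvy ?_
          rw [hpg, hu]
    · -- H,F
      rw [if_neg e13.ne, if_pos e21] at hpage
      have := hlt₁ _ _ e22
      omega
    · -- F,H
      rw [if_pos e11, if_neg e23.ne] at hpage
      have := hlt₁ _ _ e12
      omega
    · -- F,F
      rw [if_pos e11, if_pos e21] at hpage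
      have c1 : f₂ u.2 ≤ f₂ x.2 := mbe_le_of_mul_add_lt (hrN _ _) hp1
      have c2 : f₂ x.2 ≤ f₂ v.2 := mbe_le_of_mul_add_lt (hrN _ _) hp2
      have hbk : f₂ u.2 = f₂ x.2 := by
        rw [← e11] at c2
        omega
      have hw : u.2 = x.2 := hinj₂ hbk
      have hr1 : r u.2 u.1 < r u.2 x.1 := by
        rw [← hw] at hp1
        exact Nat.lt_of_add_lt_add_left hp1
      have hr2 : r u.2 x.1 < r u.2 v.1 := by
        rw [← e11, ← hw] at hp2
        exact Nat.lt_of_add_lt_add_left hp2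
      have hr3 : r u.2 v.1 < r u.2 y.1 := by
        rw [← e21, ← hw, ← e11] at hp3
        exact Nat.lt_of_add_lt_add_left hp3
      rw [hrlt] at hr1 hr2 hr3
      by_cases h0 : C u.2 = 0
      · rw [if_pos h0] at hr1 hr2 hr3
        exact hcross₁ _ _ _ _ e12 e22 hpage ⟨hr1, hr2, hr3⟩
      · rw [if_neg h0] at hr1 hr2 hr3
        refine hcross₁ y.1 x.1 v.1 u.1 e22.symm e12.symm ?_ ⟨hr3, hr2, hr1⟩
        rw [show s(y.1, x.1) = s(x.1, y.1) from Sym2.eq_swap, ← hpage, Sym2.eq_swap]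
  · -- matching
    rintro z z₁ z₂ had1 had2 hne
    rw [Sym2.lift_mk, Sym2.lift_mk]
    dsimp only
    rcases had1 with ⟨a1, -, a3⟩ | ⟨a1, a2⟩ <;> rcases had2 with ⟨b1, -, b3⟩ | ⟨b1, b2⟩
    · rw [if_neg a3.ne, if_neg b3.ne]
      intro hpg
      have hz : z₁.2 ≠ z₂.2 := by
        intro h
        exact hne (Prod.ext (a1.symm.trans b1) h)
      exact hmatch₂ z.2 z₁.2 z₂.2 a3 b3 hz (by omega)
    · rw [if_neg a3.ne, if_pos b1]
      have := hlt₁ _ _ b2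
      omega
    · rw [if_pos a1, if_neg b3.ne]
      have := hlt₁ _ _ a2
      omega
    · rw [if_pos a1, if_pos b1]
      have hz : z₁.1 ≠ z₂.1 := by
        intro h
        exact hne (Prod.ext h (a1.symm.trans b1))
      exact hmatch₁ z.1 z₁.1 z₂.1 a2 b2 hz

end MainConstruction

section CornerConstruction

/-- Corner case: `F = S` and `G` is a single edge `ab`. -/
lemma fsum_corner_construction {V W : Type*} [DecidableEq V] [Fintype W]
    (G : SimpleGraph V) (H : SimpleGraph W) (a b : V) (hab : G.Adj a b)
    (hV : ∀ v : V, v = a ∨ v = b) {dH : ℕ} {f₂ : W → ℕ} {pg₂ : Sym2 W → ℕ}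
    (h₂ : IsMBE H dH f₂ pg₂) :
    ∃ f page, IsMBE (FSum FOp.S G H) (max dH 1 + 1) f page := by
  classical
  obtain ⟨hinj₂, hlt₂, hcross₂, hmatch₂⟩ := h₂
  have hba : b ≠ a := fun h => G.loopless.irrefl a (h ▸ hab)
  have hedge : ∀ e : G.edgeSet, (e : Sym2 V) = s(a, b) := by
    rintro ⟨e, he⟩
    induction e using Sym2.ind with
    | _ x y =>
      have hxy : G.Adj x y := (G.mem_edgeSet).mp he
      have hne : x ≠ y := hxy.ne
      rcases hV x with rfl | rfl <;> rcases hV y with rfl | rfl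
      · exact absurd rfl hne
      · rfl
      · exact Sym2.eq_swap
      · exact absurd rfl hne
  have hmem : ∀ (e : G.edgeSet) (v : V), v ∈ (e : Sym2 V) → v = a ∨ v = b := by
    intro e v hv
    rw [hedge e, Sym2.mem_iff] at hv
    exact hv
  have hbne : ∀ p : V ⊕ G.edgeSet, p = Sum.inl b → ¬ p = Sum.inl a := by
    rintro p rfl h
    injection h with h
    exact hba h
  have hinrne : ∀ (e : G.edgeSet) (p : V ⊕ G.edgeSet), p = Sum.inr e → ¬ p = Sum.inl a := by
    rintro e p rfl h
    cases h
  set M : ℕ := Finset.univ.sup f₂ + 1 with hMdef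
  have hfM : ∀ w, f₂ w < M := fun w => Nat.lt_succ_of_le (Finset.le_sup (Finset.mem_univ w))
  set d' : ℕ := max dH 1 with hd'def
  have hd1 : 1 ≤ d' := le_max_right _ _
  have hdd : dH ≤ d' := le_max_left _ _
  -- adjacency classification
  have hclass : ∀ z z' : (V ⊕ G.edgeSet) × W, (FSum FOp.S G H).Adj z z' →
      (H.Adj z.2 z'.2 ∧ ((z.1 = Sum.inl a ∧ z'.1 = Sum.inl a) ∨
        (z.1 = Sum.inl b ∧ z'.1 = Sum.inl b))) ∨
      (z.2 = z'.2 ∧ ∃ e : G.edgeSet,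
        (z.1 = Sum.inl a ∧ z'.1 = Sum.inr e) ∨ (z.1 = Sum.inr e ∧ z'.1 = Sum.inl a) ∨
        (z.1 = Sum.inl b ∧ z'.1 = Sum.inr e) ∨ (z.1 = Sum.inr e ∧ z'.1 = Sum.inl b)) := by
    rintro z z' (⟨h1, ⟨u, hu⟩, h3⟩ | ⟨h1, h2⟩)
    · left
      refine ⟨h3, ?_⟩
      rcases hV u with h | h
      · rw [h] at hu
        exact Or.inl ⟨hu, h1.symm.trans hu⟩
      · rw [h] at hu
        exact Or.inr ⟨hu, h1.symm.trans hu⟩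
    · right
      refine ⟨h1, ?_⟩
      rcases hz : z.1 with u | e <;> rcases hz' : z'.1 with u' | e' <;> rw [hz, hz'] at h2
      · exact absurd h2.1 (by decide)
      · rcases hmem e' u h2 with h | h
        · exact ⟨e', Or.inl ⟨by rw [h], rfl⟩⟩
        · exact ⟨e', Or.inr (Or.inr (Or.inl ⟨by rw [h], rfl⟩))⟩
      · rcases hmem e u' h2 with h | h
        · exact ⟨e, Or.inr (Or.inl ⟨rfl, by rw [h]⟩)⟩
        · exact ⟨e, Or.inr (Or.inr (Or.inr ⟨rfl, by rw [h]⟩))⟩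
      · exact absurd h2.1 (by decide)
  set pos : (V ⊕ G.edgeSet) × W → ℕ := fun z =>
    Sum.elim (fun v => if v = a then f₂ z.2 else 2 * M + f₂ z.2)
      (fun _ => 2 * M - 1 - f₂ z.2) z.1 with hposdef
  set Pfun : ((V ⊕ G.edgeSet) × W) → ((V ⊕ G.edgeSet) × W) → ℕ := fun x y =>
    if x.2 = y.2 then (if x.1 = Sum.inl a ∨ y.1 = Sum.inl a then d' else 0)
    else (if x.1 = Sum.inl a ∧ y.1 = Sum.inl a then pg₂ s(x.2, y.2)
      else pg₂ s(x.2, y.2) + 1) with hPdef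
  have hPsymm : ∀ x y, Pfun x y = Pfun y x := by
    intro x y
    have hs : s(x.2, y.2) = s(y.2, x.2) := Sym2.eq_swap
    simp only [hPdef]
    by_cases h1 : x.2 = y.2
    · have h1' : y.2 = x.2 := h1.symm
      rw [if_pos h1, if_pos h1']
      by_cases h2 : x.1 = Sum.inl a ∨ y.1 = Sum.inl a
      · have h2' : y.1 = Sum.inl a ∨ x.1 = Sum.inl a := h2.symm
        rw [if_pos h2, if_pos h2']
      · have h2' : ¬ (y.1 = Sum.inl a ∨ x.1 = Sum.inl a) := fun hh => h2 hh.symm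
        rw [if_neg h2, if_neg h2']
    · have h1' : ¬ y.2 = x.2 := fun hh => h1 hh.symm
      rw [if_neg h1, if_neg h1', hs]
      by_cases h2 : x.1 = Sum.inl a ∧ y.1 = Sum.inl a
      · have h2' : y.1 = Sum.inl a ∧ x.1 = Sum.inl a := ⟨h2.2, h2.1⟩
        rw [if_pos h2, if_pos h2']
      · have h2' : ¬ (y.1 = Sum.inl a ∧ x.1 = Sum.inl a) := fun hh => h2 ⟨hh.2, hh.1⟩
        rw [if_neg h2, if_neg h2']
  have posA : ∀ z : (V ⊕ G.edgeSet) × W, z.1 = Sum.inl a → pos z = f₂ z.2 := by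
    intro z hz
    simp [hposdef, hz]
  have posB : ∀ z : (V ⊕ G.edgeSet) × W, z.1 = Sum.inl b → pos z = 2 * M + f₂ z.2 := by
    intro z hz
    simp [hposdef, hz, hba]
  have posE : ∀ (z : (V ⊕ G.edgeSet) × W) (e : G.edgeSet), z.1 = Sum.inr e →
      pos z = 2 * M - 1 - f₂ z.2 := by
    intro z e hz
    simp [hposdef, hz]
  have pgHa : ∀ z z' : (V ⊕ G.edgeSet) × W, z.2 ≠ z'.2 → z.1 = Sum.inl a →
      z'.1 = Sum.inl a → Pfun z z' = pg₂ s(z.2, z'.2) := by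
    intro z z' h1 h2 h3
    simp only [hPdef]
    rw [if_neg h1, if_pos ⟨h2, h3⟩]
  have pgHb : ∀ z z' : (V ⊕ G.edgeSet) × W, z.2 ≠ z'.2 → z.1 = Sum.inl b →
      Pfun z z' = pg₂ s(z.2, z'.2) + 1 := by
    intro z z' h1 h2
    simp only [hPdef]
    rw [if_neg h1, if_neg (fun hh => hbne _ h2 hh.1)]
  have pgF : ∀ z z' : (V ⊕ G.edgeSet) × W, z.2 = z'.2 →
      (z.1 = Sum.inl a ∨ z'.1 = Sum.inl a) → Pfun z z' = d' := by
    intro z z' h1 h2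
    simp only [hPdef]
    rw [if_pos h1, if_pos h2]
  have pgF0 : ∀ z z' : (V ⊕ G.edgeSet) × W, z.2 = z'.2 →
      ¬ (z.1 = Sum.inl a) → ¬ (z'.1 = Sum.inl a) → Pfun z z' = 0 := by
    intro z z' h1 h2 h3
    simp only [hPdef]
    rw [if_pos h1, if_neg (by tauto)]
  -- numeric profiles of edges
  have hprof : ∀ z z' : (V ⊕ G.edgeSet) × W, (FSum FOp.S G H).Adj z z' →
      ∃ q : ℕ, Sym2.lift ⟨Pfun, hPsymm⟩ s(z, z') = q ∧
      ((∃ w w', H.Adj w w' ∧ pos z = f₂ w ∧ pos z' = f₂ w' ∧ q = pg₂ s(w, w')) ∨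
       (∃ w w', H.Adj w w' ∧ pos z = 2 * M + f₂ w ∧ pos z' = 2 * M + f₂ w' ∧
         q = pg₂ s(w, w') + 1) ∨
       (∃ w, (pos z = f₂ w ∧ pos z' = 2 * M - 1 - f₂ w ∨
         pos z = 2 * M - 1 - f₂ w ∧ pos z' = f₂ w) ∧ q = d') ∨
       (∃ w, (pos z = 2 * M + f₂ w ∧ pos z' = 2 * M - 1 - f₂ w ∨
         pos z = 2 * M - 1 - f₂ w ∧ pos z' = 2 * M + f₂ w) ∧ q = 0)) := by
    intro z z' hadj
    have hlift : Sym2.lift ⟨Pfun, hPsymm⟩ s(z, z') = Pfun z z' := by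
      rw [Sym2.lift_mk]
    rcases hclass _ _ hadj with ⟨hH, ⟨h2, h3⟩ | ⟨h2, h3⟩⟩ | ⟨hw, e, hs⟩
    · exact ⟨pg₂ s(z.2, z'.2), by rw [hlift, pgHa _ _ hH.ne h2 h3],
        Or.inl ⟨z.2, z'.2, hH, posA _ h2, posA _ h3, rfl⟩⟩
    · exact ⟨pg₂ s(z.2, z'.2) + 1, by rw [hlift, pgHb _ _ hH.ne h2],
        Or.inr (Or.inl ⟨z.2, z'.2, hH, posB _ h2, posB _ h3, rfl⟩)⟩
    · rcases hs with ⟨h2, h3⟩ | ⟨h2, h3⟩ | ⟨h2, h3⟩ | ⟨h2, h3⟩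
      · refine ⟨d', by rw [hlift, pgF _ _ hw (Or.inl h2)],
          Or.inr (Or.inr (Or.inl ⟨z.2, Or.inl ⟨posA _ h2, ?_⟩, rfl⟩))⟩
        rw [posE _ _ h3, hw]
      · refine ⟨d', by rw [hlift, pgF _ _ hw (Or.inr h3)],
          Or.inr (Or.inr (Or.inl ⟨z.2, Or.inr ⟨posE _ _ h2, ?_⟩, rfl⟩))⟩
        rw [posA _ h3, hw]
      · refine ⟨0, by rw [hlift, pgF0 _ _ hw (hbne _ h2) (hinrne e _ h3)],
          Or.inr (Or.inr (Or.inr ⟨z.2, Or.inl ⟨posB _ h2, ?_⟩, rfl⟩))⟩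
        rw [posE _ _ h3, hw]
      · refine ⟨0, by rw [hlift, pgF0 _ _ hw (hinrne e _ h2) (hbne _ h3)],
          Or.inr (Or.inr (Or.inr ⟨z.2, Or.inr ⟨posE _ _ h2, ?_⟩, rfl⟩))⟩
        rw [posB _ h3, hw]
  refine ⟨pos, Sym2.lift ⟨Pfun, hPsymm⟩, ?_, ?_, ?_, ?_⟩
  · -- injectivity
    rintro ⟨p, w⟩ ⟨p', w'⟩ h
    simp only [hposdef] at h
    rcases p with v | e <;> rcases p' with v' | e' <;>
      simp only [Sum.elim_inl, Sum.elim_inr] at h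
    · have m1 := hfM w
      have m2 := hfM w'
      by_cases hv : v = a <;> by_cases hv' : v' = a
      · rw [if_pos hv, if_pos hv'] at h
        subst hv
        subst hv'
        rw [hinj₂ h]
      · rw [if_pos hv, if_neg hv'] at h
        exact absurd h (by omega)
      · rw [if_neg hv, if_pos hv'] at h
        exact absurd h (by omega)
      · rw [if_neg hv, if_neg hv'] at h
        have hw : w = w' := hinj₂ (by omega)
        rcases hV v with rfl | rfl
        · exact absurd rfl hv
        · rcases hV v' with rfl | rfl
          · exact absurd rfl hv'
          · rw [hw]
    · have m1 := hfM w
      have m2 := hfM w'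
      by_cases hv : v = a
      · rw [if_pos hv] at h
        exact absurd h (by omega)
      · rw [if_neg hv] at h
        exact absurd h (by omega)
    · have m1 := hfM w
      have m2 := hfM w'
      by_cases hv' : v' = a
      · rw [if_pos hv'] at h
        exact absurd h (by omega)
      · rw [if_neg hv'] at h
        exact absurd h (by omega)
    · have m1 := hfM w
      have m2 := hfM w'
      have hw : w = w' := hinj₂ (by omega)
      have he : e = e' := Subtype.ext ((hedge e).trans (hedge e').symm)
      rw [hw, he]
  · -- page bound
    intro u v hadj
    obtain ⟨q, hq, hc⟩ := hprof _ _ hadj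
    rw [hq]
    rcases hc with ⟨w1, w2, hH, -, -, e3⟩ | ⟨w1, w2, hH, -, -, e3⟩ |
      ⟨w1, -, e3⟩ | ⟨w1, -, e3⟩
    · have := hlt₂ _ _ hH
      omega
    · have := hlt₂ _ _ hH
      omega
    · omega
    · omega
  · -- crossing
    rintro u v x y h1 h2 hpage ⟨hp1, hp2, hp3⟩
    obtain ⟨q1, hq1, hc1⟩ := hprof _ _ h1
    obtain ⟨q2, hq2, hc2⟩ := hprof _ _ h2
    rw [hq1, hq2] at hpage
    rcases hc1 with ⟨w1, w2, hH1, e1, e2, e3⟩ | ⟨w1, w2, hH1, e1, e2, e3⟩ |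
      ⟨w1, e12, e3⟩ | ⟨w1, e12, e3⟩ <;>
      rcases hc2 with ⟨w3, w4, hH2, g1, g2, g3⟩ | ⟨w3, w4, hH2, g1, g2, g3⟩ |
        ⟨w3, g12, g3⟩ | ⟨w3, g12, g3⟩
    all_goals try (rcases e12 with ⟨e1, e2⟩ | ⟨e1, e2⟩)
    all_goals try (rcases g12 with ⟨g1, g2⟩ | ⟨g1, g2⟩)
    all_goals try (have hb1 := hlt₂ _ _ hH1)
    all_goals try (have hb2 := hlt₂ _ _ hH2)
    all_goals try (have m1 := hfM w1)
    all_goals try (have m2 := hfM w2)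
    all_goals try (have m3 := hfM w3)
    all_goals try (have m4 := hfM w4)
    all_goals
      first
      | exact hcross₂ w1 w2 w3 w4 hH1 hH2 (by omega) ⟨by omega, by omega, by omega⟩
      | omega
  · -- matching
    rintro z z₁ z₂ h1 h2 hne
    rw [Sym2.lift_mk, Sym2.lift_mk]
    dsimp only
    rcases hclass _ _ h1 with ⟨hH1, hc1⟩ | ⟨hw1, e1, hs1⟩ <;>
      rcases hclass _ _ h2 with ⟨hH2, hc2⟩ | ⟨hw2, e2, hs2⟩
    · rcases hc1 with ⟨ha1, hb1⟩ | ⟨ha1, hb1⟩ <;> rcases hc2 with ⟨ha2, hb2⟩ | ⟨ha2, hb2⟩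
      · rw [pgHa _ _ hH1.ne ha1 hb1, pgHa _ _ hH2.ne ha2 hb2]
        intro heq
        have hz12 : z₁.2 ≠ z₂.2 := by
          intro h
          exact hne (Prod.ext (hb1.trans hb2.symm) h)
        exact hmatch₂ z.2 z₁.2 z₂.2 hH1 hH2 hz12 heq
      · exact absurd (ha1.symm.trans ha2)
          (by simp only [Sum.inl.injEq]; exact fun h => hba h.symm)
      · exact absurd (ha1.symm.trans ha2) (by simp only [Sum.inl.injEq]; exact hba)
      · rw [pgHb _ _ hH1.ne ha1, pgHb _ _ hH2.ne ha2]
        intro heq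
        have hz12 : z₁.2 ≠ z₂.2 := by
          intro h
          exact hne (Prod.ext (hb1.trans hb2.symm) h)
        exact hmatch₂ z.2 z₁.2 z₂.2 hH1 hH2 hz12 (by omega)
    · rcases hc1 with ⟨ha1, hb1⟩ | ⟨ha1, hb1⟩ <;>
        rcases hs2 with ⟨hA, hB⟩ | ⟨hA, hB⟩ | ⟨hA, hB⟩ | ⟨hA, hB⟩
      · rw [pgHa _ _ hH1.ne ha1 hb1, pgF _ _ hw2 (Or.inl hA)]
        have := hlt₂ _ _ hH1
        omega
      · exact absurd (ha1.symm.trans hA) (by simp)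
      · exact absurd (ha1.symm.trans hA)
          (by simp only [Sum.inl.injEq]; exact fun h => hba h.symm)
      · exact absurd (ha1.symm.trans hA) (by simp)
      · exact absurd (ha1.symm.trans hA) (by simp only [Sum.inl.injEq]; exact hba)
      · exact absurd (ha1.symm.trans hA) (by simp)
      · rw [pgHb _ _ hH1.ne ha1, pgF0 _ _ hw2 (hbne _ hA) (hinrne e2 _ hB)]
        omega
      · exact absurd (ha1.symm.trans hA) (by simp)
    · rcases hs1 with ⟨hA, hB⟩ | ⟨hA, hB⟩ | ⟨hA, hB⟩ | ⟨hA, hB⟩ <;>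
        rcases hc2 with ⟨ha2, hb2⟩ | ⟨ha2, hb2⟩
      · rw [pgF _ _ hw1 (Or.inl hA), pgHa _ _ hH2.ne ha2 hb2]
        have := hlt₂ _ _ hH2
        omega
      · exact absurd (hA.symm.trans ha2)
          (by simp only [Sum.inl.injEq]; exact fun h => hba h.symm)
      · exact absurd (hA.symm.trans ha2) (by simp)
      · exact absurd (hA.symm.trans ha2) (by simp)
      · exact absurd (hA.symm.trans ha2) (by simp only [Sum.inl.injEq]; exact hba)
      · rw [pgF0 _ _ hw1 (hbne _ hA) (hinrne e1 _ hB), pgHb _ _ hH2.ne ha2]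
        omega
      · exact absurd (hA.symm.trans ha2) (by simp)
      · exact absurd (hA.symm.trans ha2) (by simp)
    · rcases hs1 with ⟨hA1, hB1⟩ | ⟨hA1, hB1⟩ | ⟨hA1, hB1⟩ | ⟨hA1, hB1⟩ <;>
        rcases hs2 with ⟨hA2, hB2⟩ | ⟨hA2, hB2⟩ | ⟨hA2, hB2⟩ | ⟨hA2, hB2⟩
      · -- ae, ae : same partner
        have he : e1 = e2 := Subtype.ext ((hedge e1).trans (hedge e2).symm)
        refine absurd (Prod.ext ?_ (hw1.symm.trans hw2)) hne
        rw [hB1, hB2, he]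
      · exact absurd (hA1.symm.trans hA2) (by simp)
      · exact absurd (hA1.symm.trans hA2)
          (by simp only [Sum.inl.injEq]; exact fun h => hba h.symm)
      · exact absurd (hA1.symm.trans hA2) (by simp)
      · exact absurd (hA1.symm.trans hA2) (by simp)
      · -- ea, ea : same partner
        refine absurd (Prod.ext ?_ (hw1.symm.trans hw2)) hne
        rw [hB1, hB2]
      · exact absurd (hA1.symm.trans hA2) (by simp)
      · -- ea, eb
        rw [pgF _ _ hw1 (Or.inr hB1), pgF0 _ _ hw2 (hinrne e2 _ hA2) (hbne _ hB2)]
        omega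
      · exact absurd (hA1.symm.trans hA2) (by simp only [Sum.inl.injEq]; exact hba)
      · exact absurd (hA1.symm.trans hA2) (by simp)
      · -- be, be : same partner
        have he : e1 = e2 := Subtype.ext ((hedge e1).trans (hedge e2).symm)
        refine absurd (Prod.ext ?_ (hw1.symm.trans hw2)) hne
        rw [hB1, hB2, he]
      · exact absurd (hA1.symm.trans hA2) (by simp)
      · exact absurd (hA1.symm.trans hA2) (by simp)
      · -- eb, ea
        rw [pgF0 _ _ hw1 (hinrne e1 _ hA1) (hbne _ hB1), pgF _ _ hw2 (Or.inr hB2)]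
        omega
      · exact absurd (hA1.symm.trans hA2) (by simp)
      · -- eb, eb : same partner
        refine absurd (Prod.ext ?_ (hw1.symm.trans hw2)) hne
        rw [hB1, hB2]

end CornerConstruction

/-- For `F ∈ {S, R, T}`, a finite connected simple graph `G` with at least
one edge, and a finite dispersable bipartite graph `H`: if `F(G)` is dispersable then
`G +_F H` is dispersable. -/
theorem FSum_dispersable (F : FOp) (hF : F ≠ FOp.Q) {V W : Type*}
    [Fintype V] [DecidableEq V] [Fintype W]
    (G : SimpleGraph V) [DecidableRel G.Adj] (H : SimpleGraph W)
    (hGconn : G.Connected) (hGE : G.edgeSet.Nonempty)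
    (hbip : H.Colorable 2) (hdisp : mbt H = maxDeg H)
    (hFG : mbt (FGraph F G) = maxDeg (FGraph F G)) :
    mbt (FSum F G H) = maxDeg (FSum F G H) := by
  classical
  by_cases hWe : IsEmpty W
  · -- trivial case: no vertices at all
    haveI hPE : IsEmpty ((V ⊕ G.edgeSet) × W) := ⟨fun p => hWe.false p.2⟩
    have h0 : IsMBE (FSum F G H) 0 (fun _ => 0) (fun _ => 0) := by
      refine ⟨fun x => isEmptyElim x, fun u => isEmptyElim u, fun u => isEmptyElim u,
        fun u => isEmptyElim u⟩
    have hm : mbt (FSum F G H) = 0 := Nat.le_zero.mp (mbt_le_of_isMBE _ h0)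
    have hM : maxDeg (FSum F G H) = 0 := by
      show Finset.univ.sup (deg (FSum F G H)) = 0
      rw [Finset.univ_eq_empty, Finset.sup_empty]
      rfl
    rw [hm, hM]
  haveI hWne : Nonempty W := not_isEmpty_iff.mp hWe
  have hexadj : ∃ x y : V, G.Adj x y := by
    obtain ⟨e, he⟩ := hGE
    induction e using Sym2.ind with
    | _ x y => exact ⟨x, y, (G.mem_edgeSet).mp he⟩
  obtain ⟨x0, y0, hxy0⟩ := hexadj
  haveI : Nonempty V := ⟨x0⟩
  -- the maximum H-degree, attained
  obtain ⟨wstar, -, hwstar⟩ := Finset.exists_mem_eq_sup (Finset.univ : Finset W)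
    Finset.univ_nonempty (deg H)
  have hmH : maxDeg H = deg H wstar := hwstar
  -- the maximum degree of F(G) over original vertices, attained
  obtain ⟨ustar, -, hustar⟩ := Finset.exists_mem_eq_sup (Finset.univ : Finset V)
    Finset.univ_nonempty (fun u : V => deg (FGraph F G) (Sum.inl u))
  have hAle : ∀ u : V, deg (FGraph F G) (Sum.inl u) ≤ deg (FGraph F G) (Sum.inl ustar) := by
    intro u
    rw [← hustar]
    exact Finset.le_sup (f := fun u : V => deg (FGraph F G) (Sum.inl u)) (Finset.mem_univ u)
  have hlb := maxDeg_le_mbt (FSum F G H)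
  by_cases hA : ∀ e : G.edgeSet, deg (FGraph F G) (Sum.inr e) ≤
      deg (FGraph F G) (Sum.inl ustar)
  · -- MAIN CASE : the maximum degree of F(G) is attained at an original vertex
    have hdF : maxDeg (FGraph F G) = deg (FGraph F G) (Sum.inl ustar) := by
      apply le_antisymm
      · apply Finset.sup_le
        intro p _
        cases p with
        | inl u => exact hAle u
        | inr e => exact hA e
      · exact Finset.le_sup (f := deg (FGraph F G)) (Finset.mem_univ (Sum.inl ustar))
    obtain ⟨f₁, pg₁, h₁⟩ := exists_isMBE_mbt (FGraph F G)
    rw [hFG, hdF] at h₁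
    obtain ⟨f₂, pg₂, h₂⟩ := exists_isMBE_mbt H
    rw [hdisp, hmH] at h₂
    obtain ⟨fc, pagec, hc⟩ := fsum_main_construction F G H h₁ h₂ hbip.some
    have hub := mbt_le_of_isMBE _ hc
    have hKle : deg (FGraph F G) (Sum.inl ustar) + deg H wstar ≤ maxDeg (FSum F G H) :=
      (deg_fsum_inl F G H ustar wstar).trans
        (Finset.le_sup (f := deg (FSum F G H)) (Finset.mem_univ _))
    omega
  · -- CORNER CASE
    push_neg at hA
    obtain ⟨e0, he0⟩ := hA
    cases F with
    | Q => exact absurd rfl hF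
    | R =>
      exfalso
      have h2 : deg (FGraph FOp.R G) (Sum.inr e0) = 2 := deg_derivedG_inr_eq G _ e0
      have h3 : deg G x0 + deg G x0 ≤ deg (FGraph FOp.R G) (Sum.inl x0) :=
        deg_derivedG_inl_ge G _ x0
      have h4 : 1 ≤ deg G x0 := by
        rw [deg_def]
        exact (Set.ncard_pos (Set.toFinite _)).mpr ⟨y0, hxy0⟩
      have h5 := hAle x0
      omega
    | T =>
      exfalso
      obtain ⟨zstar, -, hzstar⟩ := Finset.exists_mem_eq_sup (Finset.univ : Finset V)
        Finset.univ_nonempty (deg G)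
      have hsome : ∃ x y, G.Adj x y ∧ (e0 : Sym2 V) = s(x, y) := by
        have hev : (e0 : Sym2 V) ∈ G.edgeSet := e0.2
        revert hev
        generalize (e0 : Sym2 V) = ev
        induction ev using Sym2.ind with
        | _ p q =>
          intro hev
          exact ⟨p, q, (G.mem_edgeSet).mp hev, rfl⟩
      obtain ⟨x1, y1, hxy1, he1⟩ := hsome
      have hle : deg (FGraph FOp.T G) (Sum.inr e0) ≤ deg G x1 + deg G y1 :=
        deg_derivedG_inr_le G _ _ x1 y1 hxy1 e0 he1
      have h3 : deg G zstar + deg G zstar ≤ deg (FGraph FOp.T G) (Sum.inl zstar) :=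
        deg_derivedG_inl_ge G _ zstar
      have hx1 : deg G x1 ≤ deg G zstar := by
        rw [← hzstar]
        exact Finset.le_sup (f := deg G) (Finset.mem_univ x1)
      have hy1 : deg G y1 ≤ deg G zstar := by
        rw [← hzstar]
        exact Finset.le_sup (f := deg G) (Finset.mem_univ y1)
      have h5 := hAle zstar
      omega
    | S =>
      have hS_inl : ∀ u : V, deg (FGraph FOp.S G) (Sum.inl u) = deg G u := fun u =>
        deg_derivedG_inl_S G _ u
      have hS_inr : deg (FGraph FOp.S G) (Sum.inr e0) = 2 := deg_derivedG_inr_eq G _ e0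
      have hdeg1 : ∀ u : V, deg G u ≤ 1 := by
        intro u
        have h5 := hAle u
        have h6 := hAle ustar
        rw [hS_inl u] at h5
        rw [hS_inl ustar] at h6
        omega
      -- K2 structure
      have hstep : ∀ p q : V, G.Adj p q → (p = x0 ∨ p = y0) → (q = x0 ∨ q = y0) := by
        intro p q hpq hp
        by_cases hq : q = x0 ∨ q = y0
        · exact hq
        push_neg at hq
        exfalso
        rcases hp with rfl | rfl
        · have hss : ({q, y0} : Set V) ⊆ G.neighborSet p := by
            rintro z (rfl | rfl)
            · exact hpq
            · exact hxy0
          have h2 : 2 ≤ (G.neighborSet p).ncard := by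
            rw [← Set.ncard_pair hq.2]
            exact Set.ncard_le_ncard hss (Set.toFinite _)
          have h3 := hdeg1 p
          rw [deg_def] at h3
          omega
        · have hss : ({q, x0} : Set V) ⊆ G.neighborSet p := by
            rintro z (rfl | rfl)
            · exact hpq
            · exact hxy0.symm
          have h2 : 2 ≤ (G.neighborSet p).ncard := by
            rw [← Set.ncard_pair hq.1]
            exact Set.ncard_le_ncard hss (Set.toFinite _)
          have h3 := hdeg1 p
          rw [deg_def] at h3
          omega
      have hVab : ∀ v : V, v = x0 ∨ v = y0 := by
        have hwalk : ∀ (p v : V), G.Walk p v → (p = x0 ∨ p = y0) → (v = x0 ∨ v = y0) := by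
          intro p v wlk
          induction wlk with
          | nil => exact id
          | cons h w ih =>
            intro hp
            exact ih (hstep _ _ h hp)
        intro v
        obtain ⟨wlk⟩ := hGconn.preconnected x0 v
        exact hwalk _ _ wlk (Or.inl rfl)
      obtain ⟨f₂, pg₂, h₂⟩ := exists_isMBE_mbt H
      rw [hdisp, hmH] at h₂
      obtain ⟨fc, pagec, hc⟩ := fsum_corner_construction G H x0 y0 hxy0 hVab h₂
      have hub := mbt_le_of_isMBE _ hc
      have hKle : max (deg H wstar) 1 + 1 ≤ maxDeg (FSum FOp.S G H) := by
        by_cases hdH0 : deg H wstar = 0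
        · obtain ⟨w0⟩ := hWne
          have h2 := deg_fsum_fst FOp.S G H (Sum.inr e0) w0
          have h3 : deg (FSum FOp.S G H) (Sum.inr e0, w0) ≤ maxDeg (FSum FOp.S G H) :=
            Finset.le_sup (f := deg (FSum FOp.S G H)) (Finset.mem_univ _)
          omega
        · have h1 : 1 ≤ deg G x0 := by
            rw [deg_def]
            exact (Set.ncard_pos (Set.toFinite _)).mpr ⟨y0, hxy0⟩
          have h2 := deg_fsum_inl FOp.S G H x0 wstar
          have h2' := hS_inl x0
          have h3 : deg (FSum FOp.S G H) (Sum.inl x0, wstar) ≤ maxDeg (FSum FOp.S G H) :=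
            Finset.le_sup (f := deg (FSum FOp.S G H)) (Finset.mem_univ _)
          omega
      omega
end

section
/- Let n ≥ 2 and let H be any finite dispersable bipartite graph with at least one edge (H is bipartite and mbt(H) = Δ(H) ≥ 1). Then P_n +_Q H is dispersable: mbt(P_n +_Q H) = Δ(P_n +_Q H). -/
open SimpleGraph

namespace MBEAux

open SimpleGraph Sum

/-! ### Generic arithmetic helpers -/

theorem block_le {S a b o1 o2 : ℕ} (h1 : o1 < S) (hlt : a * S + o1 < b * S + o2)
    (h2 : o2 < S) : a ≤ b := by
  by_contra hab
  push_neg at hab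
  have : (b + 1) * S ≤ a * S := Nat.mul_le_mul_right _ hab
  have : b * S + o2 < a * S + o1 := by
    have hb : b * S + o2 < (b+1) * S := by ring_nf; omega
    omega
  omega

theorem adjpos1 {a b c d : ℕ} (h : b = a + 1 ∨ a = b + 1) :
    ¬(a < c ∧ c < b ∧ b < d) := by omega

theorem adjpos2 {a b c d : ℕ} (h : d = c + 1 ∨ c = d + 1) :
    ¬(a < c ∧ c < b ∧ b < d) := by omega

/-! ### Path edge structure -/

variable {n : ℕ}

noncomputable def eidx (e : (pathG n).edgeSet) : ℕ :=
  Sym2.lift ⟨fun a b => min a.1 b.1, fun a b => min_comm _ _⟩ e.1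

theorem edge_spec (e : (pathG n).edgeSet) :
    eidx e + 2 ≤ n ∧ ∀ u : Fin n, (u ∈ (e : Sym2 (Fin n)) ↔ u.1 = eidx e ∨ u.1 = eidx e + 1) := by
  obtain ⟨E, hE⟩ := e
  induction E using Sym2.inductionOn with
  | hf a b =>
    have hadj : (pathG n).Adj a b := hE
    have h : a.1 + 1 = b.1 ∨ b.1 + 1 = a.1 := hadj
    have hb := b.isLt
    have ha := a.isLt
    have he : eidx ⟨s(a, b), hE⟩ = min a.1 b.1 := by
      simp [eidx, Sym2.lift_mk]
    constructor
    · omega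
    · intro u
      rw [show ((⟨s(a,b), hE⟩ : (pathG n).edgeSet) : Sym2 (Fin n)) = s(a,b) from rfl,
        Sym2.mem_iff]
      constructor
      · rintro (rfl | rfl) <;> omega
      · have hu := u.isLt
        rintro (h1 | h1)
        · rcases Nat.lt_or_ge a.1 b.1 with hh | hh
          · left; apply Fin.ext; omega
          · right; apply Fin.ext; omega
        · rcases Nat.lt_or_ge a.1 b.1 with hh | hh
          · right; apply Fin.ext; omega
          · left; apply Fin.ext; omega

theorem eidx_lt (e : (pathG n).edgeSet) : eidx e + 2 ≤ n := (edge_spec e).1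

theorem mem_edge_iff (e : (pathG n).edgeSet) (u : Fin n) :
    u ∈ (e : Sym2 (Fin n)) ↔ u.1 = eidx e ∨ u.1 = eidx e + 1 := (edge_spec e).2 u

theorem eidx_inj {e f : (pathG n).edgeSet} (h : eidx e = eidx f) : e = f := by
  have he := edge_spec e
  have hf := edge_spec f
  apply Subtype.ext
  have h1 : (⟨eidx e, by omega⟩ : Fin n) ∈ (e : Sym2 (Fin n)) := by
    rw [mem_edge_iff]; left; rfl
  -- show both are s(⟨eidx e⟩, ⟨eidx e + 1⟩)
  ext u
  rw [mem_edge_iff, mem_edge_iff, h]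

end MBEAux
namespace MBEAux

open SimpleGraph Sum

/-! ### Existence of some MBE; lower bound `maxDeg ≤ k` -/

theorem exists_mbe {V : Type*} [Fintype V] (G : SimpleGraph V) :
    {k | ∃ f page, IsMBE G k f page}.Nonempty := by
  classical
  refine ⟨Fintype.card (Sym2 V), fun v => (Fintype.equivFin V v).1,
    fun s => (Fintype.equivFin (Sym2 V) s).1, ?_, ?_, ?_, ?_⟩
  · intro a b hab
    exact (Fintype.equivFin V).injective (Fin.ext hab)
  · intro u v _
    exact (Fintype.equivFin (Sym2 V) _).isLt
  · intro u v x y huv hxy hp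
    have hs : s(u, v) = s(x, y) := (Fintype.equivFin (Sym2 V)).injective (Fin.ext hp)
    rw [Sym2.eq_iff] at hs
    rcases hs with ⟨rfl, rfl⟩ | ⟨rfl, rfl⟩ <;> omega
  · intro u v w _ _ hvw hp
    have hs : s(u, v) = s(u, w) := (Fintype.equivFin (Sym2 V)).injective (Fin.ext hp)
    exact hvw (Sym2.congr_right.mp hs)

theorem maxDeg_le_of_mbe {V : Type*} [Fintype V] {G : SimpleGraph V} {k : ℕ}
    {f : V → ℕ} {page : Sym2 V → ℕ} (h : IsMBE G k f page) : maxDeg G ≤ k := by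
  classical
  obtain ⟨-, hlt, -, hmatch⟩ := h
  refine Finset.sup_le fun v _ => ?_
  have hfin : (G.neighborSet v).Finite := Set.toFinite _
  rw [deg, Set.ncard_eq_toFinset_card' ]
  have := Finset.card_le_card_of_injOn (s := (G.neighborSet v).toFinset)
    (f := fun u => page s(v, u)) (t := Finset.range k) ?_ ?_
  · simpa using this
  · intro u hu
    simp only [Finset.mem_coe, Set.mem_toFinset, mem_neighborSet] at hu
    exact Finset.mem_range.mpr (hlt v u hu)
  · intro u1 h1 u2 h2 hp
    simp only [Finset.mem_coe, Set.mem_toFinset, mem_neighborSet] at h1 h2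
    by_contra hne
    exact hmatch v u1 u2 h1 h2 hne hp

theorem exists_deg_eq_maxDeg {V : Type*} [Fintype V] [Nonempty V] (G : SimpleGraph V) :
    ∃ v, deg G v = maxDeg G := by
  obtain ⟨v, -, hv⟩ := Finset.exists_mem_eq_sup Finset.univ Finset.univ_nonempty (deg G)
  exact ⟨v, hv.symm⟩

/-! ### FSum adjacency -/

theorem fsum_adj {V W : Type*} (F : FOp) (G : SimpleGraph V) (H : SimpleGraph W)
    (x y : (V ⊕ G.edgeSet) × W) :
    (FSum F G H).Adj x y ↔
      ((x.1 = y.1 ∧ (∃ u : V, x.1 = Sum.inl u) ∧ H.Adj x.2 y.2) ∨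
       (x.2 = y.2 ∧ (FGraph F G).Adj x.1 y.1)) := Iff.rfl

theorem fgraphQ_adj_cases {V : Type*} (G : SimpleGraph V) (a b : V ⊕ G.edgeSet)
    (h : (FGraph .Q G).Adj a b) :
    (∃ u e, a = inl u ∧ b = inr e ∧ u ∈ (e : Sym2 V)) ∨
    (∃ u e, a = inr e ∧ b = inl u ∧ u ∈ (e : Sym2 V)) ∨
    (∃ e f, a = inr e ∧ b = inr f ∧ e ≠ f ∧
      ∃ w, w ∈ (e : Sym2 V) ∧ w ∈ (f : Sym2 V)) := by
  rcases a with u | e <;> rcases b with v | f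
  · exact absurd h (by rintro ⟨h1, -⟩; simp [FOp.black] at h1)
  · exact Or.inl ⟨u, f, rfl, rfl, h⟩
  · exact Or.inr (Or.inl ⟨v, e, rfl, rfl, h⟩)
  · exact Or.inr (Or.inr ⟨e, f, rfl, rfl, h.2.1, h.2.2⟩)

end MBEAux
namespace MBEAux

open SimpleGraph Sum

section Core

variable {W : Type*} {H : SimpleGraph W} {fH : W → ℕ} {pg : Sym2 W → ℕ} {D : ℕ}
variable {cb : W → Bool} {n : ℕ}

/-- Position of an element with offset `t` in the block of `w`. -/
def pval (fH : W → ℕ) (cb : W → Bool) (n : ℕ) (t : ℕ) (w : W) : ℕ :=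
  fH w * (2 * n) + (if cb w then (2 * n - 2) - t else t)

theorem pval_blk_le (hn : 1 ≤ n) {t1 t2 : ℕ} (h1 : t1 ≤ 2 * n - 2) (h2 : t2 ≤ 2 * n - 2)
    {w1 w2 : W} (h : pval fH cb n t1 w1 < pval fH cb n t2 w2) : fH w1 ≤ fH w2 := by
  unfold pval at h
  refine block_le (S := 2 * n) ?_ h ?_ <;> split <;> omega

theorem pval_off_lt {t1 t2 : ℕ} {w : W}
    (h : pval fH cb n t1 w < pval fH cb n t2 w) :
    (if cb w then (2 * n - 2) - t1 else t1) < (if cb w then (2 * n - 2) - t2 else t2) := by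
  unfold pval at h; omega

theorem pval_lt_of_blk (hn : 1 ≤ n) {t1 t2 : ℕ} (b1 : t1 ≤ 2 * n - 2)
    (b2 : t2 ≤ 2 * n - 2) {w1 w2 : W}
    (hw : fH w1 < fH w2) : pval fH cb n t1 w1 < pval fH cb n t2 w2 := by
  unfold pval
  have h2 : fH w1 * (2 * n) + 2 * n ≤ fH w2 * (2 * n) := by
    have h3 : (fH w1 + 1) * (2 * n) ≤ fH w2 * (2 * n) := Nat.mul_le_mul_right _ hw
    rw [Nat.add_mul, one_mul] at h3
    exact h3
  split <;> split <;> omega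

theorem pval_inj (hn : 1 ≤ n) (hfH : Function.Injective fH)
    {t1 t2 : ℕ} (b1 : t1 ≤ 2 * n - 2) (b2 : t2 ≤ 2 * n - 2) {w1 w2 : W}
    (h : pval fH cb n t1 w1 = pval fH cb n t2 w2) : t1 = t2 ∧ w1 = w2 := by
  have hw : w1 = w2 := by
    apply hfH
    rcases lt_trichotomy (fH w1) (fH w2) with h' | h' | h'
    · exact absurd h (Nat.ne_of_lt (pval_lt_of_blk (cb := cb) hn b1 b2 h'))
    · exact h'
    · exact absurd h.symm (Nat.ne_of_lt (pval_lt_of_blk (cb := cb) hn b2 b1 h'))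
  subst hw
  refine ⟨?_, rfl⟩
  unfold pval at h
  split at h <;> omega

/-- No-crossing for two vertical edges. -/
theorem vv_core (hIs : IsMBE H D fH pg) (hcb : ∀ {a b : W}, H.Adj a b → cb a ≠ cb b)
    (hn : 1 ≤ n) {wx wy wu wv : W} (hxy : H.Adj wx wy) (huv : H.Adj wu wv)
    (hpg : pg s(wx, wy) = pg s(wu, wv)) {a b : ℕ} (ha : a ≤ 2 * n - 2) (hb : b ≤ 2 * n - 2) :
    ¬(pval fH cb n a wx < pval fH cb n b wu ∧ pval fH cb n b wu < pval fH cb n a wy ∧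
      pval fH cb n a wy < pval fH cb n b wv) := by
  rintro ⟨c1, c2, c3⟩
  obtain ⟨hfH, hlt, hcross, hmatch⟩ := hIs
  have l1 := pval_blk_le (cb := cb) hn ha hb c1
  have l2 := pval_blk_le (cb := cb) hn hb ha c2
  have l3 := pval_blk_le (cb := cb) hn ha hb c3
  by_cases hee : s(wx, wy) = s(wu, wv)
  · rw [Sym2.eq_iff] at hee
    rcases hee with ⟨rfl, rfl⟩ | ⟨rfl, rfl⟩
    · -- same edge, possibly different columns: use opposite colors
      have hc : cb wx ≠ cb wy := hcb hxy
      have o1 := pval_off_lt (cb := cb) (n := n) c1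
      have o3 := pval_off_lt (cb := cb) (n := n) c3
      have hcol : (cb wx = true ∧ cb wy = false) ∨ (cb wx = false ∧ cb wy = true) := by
        cases hx : cb wx <;> cases hy : cb wy <;> simp_all
      rcases hcol with ⟨e1, e2⟩ | ⟨e1, e2⟩ <;> rw [e1] at o1 <;> rw [e2] at o3 <;>
        simp at o1 o3 <;> omega
    · -- reversed orientation of the same edge
      exact absurd (hfH (le_antisymm l1 l3)) hxy.ne
  · -- different edges
    by_cases hxu : wx = wu
    · subst hxu
      have hyv : wy ≠ wv := fun h => hee (by rw [h])
      exact hmatch wx wy wv hxy huv hyv hpg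
    · by_cases hxv : wx = wv
      · subst hxv
        have hyu : wy ≠ wu := by
          intro h; subst h
          exact hee (Sym2.eq_swap (a := wy) (b := wx) ▸ rfl)
        rw [show s(wu, wx) = s(wx, wu) from Sym2.eq_swap] at hpg
        exact hmatch wx wy wu hxy huv.symm hyu hpg
      · by_cases hyu : wy = wu
        · subst hyu
          have hxv' : wx ≠ wv := hxv
          rw [show s(wx, wy) = s(wy, wx) from Sym2.eq_swap] at hpg
          exact hmatch wy wx wv hxy.symm huv hxv' hpg
        · by_cases hyv : wy = wv
          · subst hyv
            rw [show s(wx, wy) = s(wy, wx) from Sym2.eq_swap,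
              show s(wu, wy) = s(wy, wu) from Sym2.eq_swap] at hpg
            exact hmatch wy wx wu hxy.symm huv.symm hxu hpg
          · -- all four vertices distinct
            refine hcross wx wy wu wv hxy huv hpg ⟨?_, ?_, ?_⟩
            · exact lt_of_le_of_ne l1 (fun h => hxu (hfH h))
            · exact lt_of_le_of_ne l2 (fun h => hyu (hfH h.symm))
            · exact lt_of_le_of_ne l3 (fun h => hyv (hfH h))

end Core

end MBEAux
namespace MBEAux

open SimpleGraph Sum

section Constr3

variable {W : Type*} {n : ℕ}

/-- Within-block offset for the `n ≥ 3` layout: block is `v_{n-1}, …, v_0, e_0, …, e_{n-2}`. -/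
noncomputable def fwd3 (n : ℕ) : (Fin n ⊕ (pathG n).edgeSet) → ℕ
  | inl i => n - 1 - i.1
  | inr e => n + eidx e

theorem fwd3_le (hn : 1 ≤ n) (q : Fin n ⊕ (pathG n).edgeSet) : fwd3 n q ≤ 2 * n - 2 := by
  cases q with
  | inl i => have := i.isLt; simp only [fwd3]; omega
  | inr e => have := eidx_lt e; simp only [fwd3]; omega

theorem fwd3_inj (hn : 1 ≤ n) : Function.Injective (fwd3 n) := by
  rintro (i | e) (j | f) h <;> simp only [fwd3] at h
  · have hi := i.isLt; have hj := j.isLt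
    exact congrArg inl (Fin.ext (by omega))
  · have hi := i.isLt; have hf := eidx_lt f; omega
  · have hj := j.isLt; have he := eidx_lt e; omega
  · exact congrArg inr (eidx_inj (by omega))

noncomputable def pos3 (fH : W → ℕ) (cb : W → Bool) (n : ℕ)
    (x : (Fin n ⊕ (pathG n).edgeSet) × W) : ℕ :=
  pval fH cb n (fwd3 n x.1) x.2

noncomputable def pageF3 (pg : Sym2 W → ℕ) (D : ℕ) :
    (Fin n ⊕ (pathG n).edgeSet) × W → (Fin n ⊕ (pathG n).edgeSet) × W → ℕ
  | (inl _, w), (inl _, w') => pg s(w, w')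
  | (inl i, _), (inr e, _) => if i.1 = eidx e then D else D + 1
  | (inr e, _), (inl i, _) => if i.1 = eidx e then D else D + 1
  | (inr e, _), (inr f, _) =>
      if (min (eidx e) (eidx f)) % 2 = 0 then 0 else (if 2 ≤ D then 1 else 3)

theorem pageF3_comm (pg : Sym2 W → ℕ) (D : ℕ)
    (x y : (Fin n ⊕ (pathG n).edgeSet) × W) : pageF3 pg D x y = pageF3 pg D y x := by
  rcases x with ⟨q1 | e1, w1⟩ <;> rcases y with ⟨q2 | e2, w2⟩ <;> simp only [pageF3]
  · rw [Sym2.eq_swap]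
  · rw [min_comm]

noncomputable def page3 (pg : Sym2 W → ℕ) (D : ℕ) :
    Sym2 ((Fin n ⊕ (pathG n).edgeSet) × W) → ℕ :=
  Sym2.lift ⟨fun x y => pageF3 pg D x y, pageF3_comm pg D⟩

theorem page3_mk (pg : Sym2 W → ℕ) (D : ℕ) (x y : (Fin n ⊕ (pathG n).edgeSet) × W) :
    page3 pg D s(x, y) = pageF3 pg D x y := rfl

/-- Classification of the edges of `P_n +_Q H`. -/
theorem adj_cases (H : SimpleGraph W) {x y : (Fin n ⊕ (pathG n).edgeSet) × W}
    (h : (FSum .Q (pathG n) H).Adj x y) :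
    (∃ i w w', x = (inl i, w) ∧ y = (inl i, w') ∧ H.Adj w w') ∨
    (∃ i : Fin n, ∃ e w, x = (inl i, w) ∧ y = (inr e, w) ∧
      (i.1 = eidx e ∨ i.1 = eidx e + 1)) ∨
    (∃ i : Fin n, ∃ e w, x = (inr e, w) ∧ y = (inl i, w) ∧
      (i.1 = eidx e ∨ i.1 = eidx e + 1)) ∨
    (∃ e f w, x = (inr e, w) ∧ y = (inr f, w) ∧
      (eidx f = eidx e + 1 ∨ eidx e = eidx f + 1)) := by
  obtain ⟨q1, w1⟩ := x
  obtain ⟨q2, w2⟩ := y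
  rcases (fsum_adj _ _ _ _ _).mp h with ⟨h11, ⟨i, hi⟩, hH⟩ | ⟨h22, hQ⟩
  · simp only at h11 hi hH
    subst h11; subst hi
    exact Or.inl ⟨i, w1, w2, rfl, rfl, hH⟩
  · simp only at h22 hQ
    subst h22
    rcases fgraphQ_adj_cases _ _ _ hQ with ⟨u, e, h1, h2, hm⟩ | ⟨u, e, h1, h2, hm⟩ |
      ⟨e, f, h1, h2, hne, w', hw1, hw2⟩
    · subst h1; subst h2
      exact Or.inr (Or.inl ⟨u, e, w1, rfl, rfl, (mem_edge_iff e u).mp hm⟩)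
    · subst h1; subst h2
      exact Or.inr (Or.inr (Or.inl ⟨u, e, w1, rfl, rfl, (mem_edge_iff e u).mp hm⟩))
    · subst h1; subst h2
      refine Or.inr (Or.inr (Or.inr ⟨e, f, w1, rfl, rfl, ?_⟩))
      have he := (mem_edge_iff e w').mp hw1
      have hf := (mem_edge_iff f w').mp hw2
      have hef : eidx e ≠ eidx f := fun hh => hne (eidx_inj hh)
      omega

end Constr3

end MBEAux
namespace MBEAux

open SimpleGraph Sum

section MBE3

variable {W : Type*} {n : ℕ}

theorem c_adjpos (fH : W → ℕ) (cb : W → Bool) (hn1 : 1 ≤ n)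
    {e f : (pathG n).edgeSet} {w : W}
    (hef : eidx f = eidx e + 1 ∨ eidx e = eidx f + 1) :
    pos3 fH cb n (inr f, w) = pos3 fH cb n (inr e, w) + 1 ∨
    pos3 fH cb n (inr e, w) = pos3 fH cb n (inr f, w) + 1 := by
  have he := eidx_lt e; have hf := eidx_lt f
  simp only [pos3, pval, fwd3]
  split_ifs <;> omega

theorem mbe3 (H : SimpleGraph W) (fH : W → ℕ) (pg : Sym2 W → ℕ) (D : ℕ)
    (hIs : IsMBE H D fH pg) (hD : 1 ≤ D)
    (cb : W → Bool) (hcb : ∀ {a b : W}, H.Adj a b → cb a ≠ cb b)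
    (hn : 3 ≤ n) :
    IsMBE (FSum .Q (pathG n) H) (max (D + 2) (min n 4)) (pos3 fH cb n) (page3 pg D) := by
  have hn1 : 1 ≤ n := by omega
  refine ⟨?_, ?_, ?_, ?_⟩
  · -- injectivity
    intro x y hxy
    obtain ⟨ht, hw⟩ := pval_inj hn1 hIs.1 (fwd3_le hn1 x.1) (fwd3_le hn1 y.1) hxy
    obtain ⟨q1, w1⟩ := x; obtain ⟨q2, w2⟩ := y
    simp only at ht hw
    rw [Prod.mk.injEq]
    exact ⟨fwd3_inj hn1 ht, hw⟩
  · -- pages in range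
    intro u v hadj
    have hK2 : D + 2 ≤ max (D + 2) (min n 4) := le_max_left _ _
    rcases adj_cases H hadj with ⟨i, wx, wy, rfl, rfl, hH⟩ | ⟨i, e, w, rfl, rfl, hi⟩ |
      ⟨i, e, w, rfl, rfl, hi⟩ | ⟨e, f, w, rfl, rfl, hef⟩
    · rw [page3_mk]; simp only [pageF3]
      have := hIs.2.1 _ _ hH; omega
    · rw [page3_mk]; simp only [pageF3]; split <;> omega
    · rw [page3_mk]; simp only [pageF3]; split <;> omega
    · rw [page3_mk]; simp only [pageF3]
      have he := eidx_lt e; have hf := eidx_lt f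
      have h4 : min n 4 ≤ max (D + 2) (min n 4) := le_max_right _ _
      split_ifs <;> omega
  · -- no two edges on a common page cross
    intro u v x y h1 h2 hp
    rcases adj_cases H h2 with ⟨j, wu, wv, rfl, rfl, Huv⟩ | ⟨j, e2, w2, rfl, rfl, hj⟩ |
      ⟨j, e2, w2, rfl, rfl, hj⟩ | ⟨e2, f2, w2, rfl, rfl, hef2⟩
    · -- edge2 vertical
      rcases adj_cases H h1 with ⟨i, wx, wy, rfl, rfl, Hxy⟩ | ⟨i, e1, w1, rfl, rfl, hi⟩ |
        ⟨i, e1, w1, rfl, rfl, hi⟩ | ⟨e1, f1, w1, rfl, rfl, hef1⟩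
      · -- V-V
        rw [page3_mk, page3_mk] at hp; simp only [pageF3] at hp
        exact vv_core hIs hcb hn1 Hxy Huv hp (fwd3_le hn1 (inl i)) (fwd3_le hn1 (inl j))
      · -- AB-V
        rw [page3_mk, page3_mk] at hp; simp only [pageF3] at hp
        have := hIs.2.1 _ _ Huv
        intro _; split_ifs at hp <;> omega
      · rw [page3_mk, page3_mk] at hp; simp only [pageF3] at hp
        have := hIs.2.1 _ _ Huv
        intro _; split_ifs at hp <;> omega
      · -- C-V : the C edge occupies adjacent positions
        exact adjpos1 (c_adjpos fH cb hn1 hef1)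
    · -- edge2 = AB, oriented (inl, inr)
      rcases adj_cases H h1 with ⟨i, wx, wy, rfl, rfl, Hxy⟩ | ⟨i, e1, w1, rfl, rfl, hi⟩ |
        ⟨i, e1, w1, rfl, rfl, hi⟩ | ⟨e1, f1, w1, rfl, rfl, hef1⟩
      · rw [page3_mk, page3_mk] at hp; simp only [pageF3] at hp
        have := hIs.2.1 _ _ Hxy
        intro _; split_ifs at hp <;> omega
      · -- AB-AB (lr, lr)
        rw [page3_mk, page3_mk] at hp; simp only [pageF3] at hp
        rintro ⟨c1, c2, c3⟩
        simp only [pos3] at c1 c2 c3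
        by_cases hww : w1 = w2
        · subst hww
          have o1 := pval_off_lt (cb := cb) c1
          have o2 := pval_off_lt (cb := cb) c2
          have o3 := pval_off_lt (cb := cb) c3
          simp only [fwd3] at o1 o2 o3
          have hb1 := i.isLt; have hb2 := j.isLt
          have he1 := eidx_lt e1; have he2 := eidx_lt e2
          split_ifs at hp <;> split_ifs at o1 o2 o3 <;> omega
        · have l1 := pval_blk_le (cb := cb) hn1 (fwd3_le hn1 _) (fwd3_le hn1 _) c1
          have l2 := pval_blk_le (cb := cb) hn1 (fwd3_le hn1 _) (fwd3_le hn1 _) c2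
          exact hww (hIs.1 (le_antisymm l1 l2))
      · -- AB-AB (rl, lr)
        rw [page3_mk, page3_mk] at hp; simp only [pageF3] at hp
        rintro ⟨c1, c2, c3⟩
        simp only [pos3] at c1 c2 c3
        by_cases hww : w1 = w2
        · subst hww
          have o1 := pval_off_lt (cb := cb) c1
          have o2 := pval_off_lt (cb := cb) c2
          have o3 := pval_off_lt (cb := cb) c3
          simp only [fwd3] at o1 o2 o3
          have hb1 := i.isLt; have hb2 := j.isLt
          have he1 := eidx_lt e1; have he2 := eidx_lt e2
          split_ifs at hp <;> split_ifs at o1 o2 o3 <;> omega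
        · have l1 := pval_blk_le (cb := cb) hn1 (fwd3_le hn1 _) (fwd3_le hn1 _) c1
          have l2 := pval_blk_le (cb := cb) hn1 (fwd3_le hn1 _) (fwd3_le hn1 _) c2
          exact hww (hIs.1 (le_antisymm l1 l2))
      · exact adjpos1 (c_adjpos fH cb hn1 hef1)
    · -- edge2 = AB, oriented (inr, inl)
      rcases adj_cases H h1 with ⟨i, wx, wy, rfl, rfl, Hxy⟩ | ⟨i, e1, w1, rfl, rfl, hi⟩ |
        ⟨i, e1, w1, rfl, rfl, hi⟩ | ⟨e1, f1, w1, rfl, rfl, hef1⟩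
      · rw [page3_mk, page3_mk] at hp; simp only [pageF3] at hp
        have := hIs.2.1 _ _ Hxy
        intro _; split_ifs at hp <;> omega
      · rw [page3_mk, page3_mk] at hp; simp only [pageF3] at hp
        rintro ⟨c1, c2, c3⟩
        simp only [pos3] at c1 c2 c3
        by_cases hww : w1 = w2
        · subst hww
          have o1 := pval_off_lt (cb := cb) c1
          have o2 := pval_off_lt (cb := cb) c2
          have o3 := pval_off_lt (cb := cb) c3
          simp only [fwd3] at o1 o2 o3
          have hb1 := i.isLt; have hb2 := j.isLt
          have he1 := eidx_lt e1; have he2 := eidx_lt e2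
          split_ifs at hp <;> split_ifs at o1 o2 o3 <;> omega
        · have l1 := pval_blk_le (cb := cb) hn1 (fwd3_le hn1 _) (fwd3_le hn1 _) c1
          have l2 := pval_blk_le (cb := cb) hn1 (fwd3_le hn1 _) (fwd3_le hn1 _) c2
          exact hww (hIs.1 (le_antisymm l1 l2))
      · rw [page3_mk, page3_mk] at hp; simp only [pageF3] at hp
        rintro ⟨c1, c2, c3⟩
        simp only [pos3] at c1 c2 c3
        by_cases hww : w1 = w2
        · subst hww
          have o1 := pval_off_lt (cb := cb) c1
          have o2 := pval_off_lt (cb := cb) c2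
          have o3 := pval_off_lt (cb := cb) c3
          simp only [fwd3] at o1 o2 o3
          have hb1 := i.isLt; have hb2 := j.isLt
          have he1 := eidx_lt e1; have he2 := eidx_lt e2
          split_ifs at hp <;> split_ifs at o1 o2 o3 <;> omega
        · have l1 := pval_blk_le (cb := cb) hn1 (fwd3_le hn1 _) (fwd3_le hn1 _) c1
          have l2 := pval_blk_le (cb := cb) hn1 (fwd3_le hn1 _) (fwd3_le hn1 _) c2
          exact hww (hIs.1 (le_antisymm l1 l2))
      · exact adjpos1 (c_adjpos fH cb hn1 hef1)
    · -- edge2 is a C edge: adjacent positions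
      exact adjpos2 (c_adjpos fH cb hn1 hef2)
  · -- matching condition
    intro u v z h1 h2 hvz
    rcases adj_cases H h1 with ⟨i, a, b, rfl, rfl, H1⟩ | ⟨i, e1, a, rfl, rfl, hi1⟩ |
      ⟨i, e1, a, rfl, rfl, hi1⟩ | ⟨e, f1, a, rfl, rfl, hef1⟩
    · -- edge1 vertical at (inl i, a)
      rcases adj_cases H h2 with ⟨i', a', b2, hu, rfl, H2⟩ | ⟨i', e2, a', hu, rfl, hi2⟩ |
        ⟨i', e2, a', hu, rfl, hi2⟩ | ⟨e', f2, a', hu, rfl, hef2⟩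
      · rw [Prod.mk.injEq] at hu
        obtain ⟨hq, rfl⟩ := hu
        obtain rfl := Sum.inl.inj hq
        rw [page3_mk, page3_mk]; simp only [pageF3]
        have hbb : b ≠ b2 := fun hh => hvz (by rw [hh])
        exact hIs.2.2.2 a b b2 H1 H2 hbb
      · rw [Prod.mk.injEq] at hu
        obtain ⟨hq, rfl⟩ := hu
        obtain rfl := Sum.inl.inj hq
        rw [page3_mk, page3_mk]; simp only [pageF3]
        have := hIs.2.1 _ _ H1
        intro hpp; split_ifs at hpp <;> omega
      · rw [Prod.mk.injEq] at hu
        exact absurd hu.1 (by simp)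
      · rw [Prod.mk.injEq] at hu
        exact absurd hu.1 (by simp)
    · -- edge1 = AB from (inl i, a) to (inr e1, a)
      rcases adj_cases H h2 with ⟨i', a', b2, hu, rfl, H2⟩ | ⟨i', e2, a', hu, rfl, hi2⟩ |
        ⟨i', e2, a', hu, rfl, hi2⟩ | ⟨e', f2, a', hu, rfl, hef2⟩
      · rw [Prod.mk.injEq] at hu
        obtain ⟨hq, rfl⟩ := hu
        obtain rfl := Sum.inl.inj hq
        rw [page3_mk, page3_mk]; simp only [pageF3]
        have := hIs.2.1 _ _ H2
        intro hpp; split_ifs at hpp <;> omega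
      · rw [Prod.mk.injEq] at hu
        obtain ⟨hq, rfl⟩ := hu
        obtain rfl := Sum.inl.inj hq
        rw [page3_mk, page3_mk]; simp only [pageF3]
        intro hpp
        have hee : eidx e1 = eidx e2 := by split_ifs at hpp <;> omega
        exact hvz (by rw [eidx_inj hee])
      · rw [Prod.mk.injEq] at hu
        exact absurd hu.1 (by simp)
      · rw [Prod.mk.injEq] at hu
        exact absurd hu.1 (by simp)
    · -- edge1 = AB from (inr e1, a) to (inl i, a)
      rcases adj_cases H h2 with ⟨i', a', b2, hu, rfl, H2⟩ | ⟨i', e2, a', hu, rfl, hi2⟩ |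
        ⟨i', e2, a', hu, rfl, hi2⟩ | ⟨e', f2, a', hu, rfl, hef2⟩
      · rw [Prod.mk.injEq] at hu
        exact absurd hu.1 (by simp)
      · rw [Prod.mk.injEq] at hu
        exact absurd hu.1 (by simp)
      · rw [Prod.mk.injEq] at hu
        obtain ⟨hq, rfl⟩ := hu
        obtain rfl := Sum.inr.inj hq
        rw [page3_mk, page3_mk]; simp only [pageF3]
        intro hpp
        have hii : i.1 = i'.1 := by split_ifs at hpp <;> omega
        exact hvz (by rw [Fin.ext hii])
      · rw [Prod.mk.injEq] at hu
        obtain ⟨hq, rfl⟩ := hu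
        obtain rfl := Sum.inr.inj hq
        rw [page3_mk, page3_mk]; simp only [pageF3]
        intro hpp
        have he := eidx_lt e1; have hf := eidx_lt f2
        split_ifs at hpp <;> omega
    · -- edge1 = C from (inr e, a) to (inr f1, a)
      rcases adj_cases H h2 with ⟨i', a', b2, hu, rfl, H2⟩ | ⟨i', e2, a', hu, rfl, hi2⟩ |
        ⟨i', e2, a', hu, rfl, hi2⟩ | ⟨e', f2, a', hu, rfl, hef2⟩
      · rw [Prod.mk.injEq] at hu
        exact absurd hu.1 (by simp)
      · rw [Prod.mk.injEq] at hu
        exact absurd hu.1 (by simp)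
      · rw [Prod.mk.injEq] at hu
        obtain ⟨hq, rfl⟩ := hu
        obtain rfl := Sum.inr.inj hq
        rw [page3_mk, page3_mk]; simp only [pageF3]
        intro hpp
        have he := eidx_lt e; have hf := eidx_lt f1
        split_ifs at hpp <;> omega
      · rw [Prod.mk.injEq] at hu
        obtain ⟨hq, rfl⟩ := hu
        obtain rfl := Sum.inr.inj hq
        rw [page3_mk, page3_mk]; simp only [pageF3]
        intro hpp
        have hne : eidx f1 ≠ eidx f2 := fun hh => hvz (by rw [eidx_inj hh])
        split_ifs at hpp <;> omega

end MBE3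

end MBEAux
namespace MBEAux

open SimpleGraph Sum

section MBE2

variable {W : Type*}

/-- Block layout for `n = 2` : `v₀, e, v₁`. -/
noncomputable def fwd2 : (Fin 2 ⊕ (pathG 2).edgeSet) → ℕ
  | inl i => 2 * i.1
  | inr _ => 1

theorem fwd2_le (q : Fin 2 ⊕ (pathG 2).edgeSet) : fwd2 q ≤ 2 * 2 - 2 := by
  cases q with
  | inl i => have := i.isLt; simp only [fwd2]; omega
  | inr e => simp only [fwd2]; omega

theorem fwd2_inj : Function.Injective fwd2 := by
  rintro (i | e) (j | f) h <;> simp only [fwd2] at h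
  · have hi := i.isLt; have hj := j.isLt
    exact congrArg inl (Fin.ext (by omega))
  · have hi := i.isLt; omega
  · have hj := j.isLt; omega
  · have h1 := eidx_lt e; have h2 := eidx_lt f
    exact congrArg inr (eidx_inj (by omega))

noncomputable def pos2 (fH : W → ℕ) (cb : W → Bool)
    (x : (Fin 2 ⊕ (pathG 2).edgeSet) × W) : ℕ :=
  pval fH cb 2 (fwd2 x.1) x.2

/-- The page-relabelling permutation for odd columns: `0 ↦ D`, else identity. -/
def sfun (D q : ℕ) : ℕ := if q = 0 then D else q

noncomputable def pageF2 (pg : Sym2 W → ℕ) (D : ℕ) :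
    (Fin 2 ⊕ (pathG 2).edgeSet) × W → (Fin 2 ⊕ (pathG 2).edgeSet) × W → ℕ
  | (inl i, w), (inl j, w') => if i.1 + j.1 = 0 then pg s(w, w') else sfun D (pg s(w, w'))
  | (inl i, _), (inr _, _) => if i.1 = 0 then D else 0
  | (inr _, _), (inl i, _) => if i.1 = 0 then D else 0
  | (inr _, _), (inr _, _) => 0

theorem pageF2_comm (pg : Sym2 W → ℕ) (D : ℕ)
    (x y : (Fin 2 ⊕ (pathG 2).edgeSet) × W) : pageF2 pg D x y = pageF2 pg D y x := by
  rcases x with ⟨q1 | e1, w1⟩ <;> rcases y with ⟨q2 | e2, w2⟩ <;> simp only [pageF2]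
  rw [Sym2.eq_swap, Nat.add_comm]

noncomputable def page2 (pg : Sym2 W → ℕ) (D : ℕ) :
    Sym2 ((Fin 2 ⊕ (pathG 2).edgeSet) × W) → ℕ :=
  Sym2.lift ⟨fun x y => pageF2 pg D x y, pageF2_comm pg D⟩

theorem page2_mk (pg : Sym2 W → ℕ) (D : ℕ) (x y : (Fin 2 ⊕ (pathG 2).edgeSet) × W) :
    page2 pg D s(x, y) = pageF2 pg D x y := rfl

theorem h2_adjpos (fH : W → ℕ) (cb : W → Bool) (i : Fin 2) (e : (pathG 2).edgeSet) (w : W) :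
    pos2 fH cb (inr e, w) = pos2 fH cb (inl i, w) + 1 ∨
    pos2 fH cb (inl i, w) = pos2 fH cb (inr e, w) + 1 := by
  have hi := i.isLt
  simp only [pos2, pval, fwd2]
  split_ifs <;> omega

theorem mbe2 (H : SimpleGraph W) (fH : W → ℕ) (pg : Sym2 W → ℕ) (D : ℕ)
    (hIs : IsMBE H D fH pg) (hD : 1 ≤ D)
    (cb : W → Bool) (hcb : ∀ {a b : W}, H.Adj a b → cb a ≠ cb b) :
    IsMBE (FSum .Q (pathG 2) H) (D + 1) (pos2 fH cb) (page2 pg D) := by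
  have hn1 : (1 : ℕ) ≤ 2 := by omega
  refine ⟨?_, ?_, ?_, ?_⟩
  · -- injectivity
    intro x y hxy
    obtain ⟨ht, hw⟩ := pval_inj hn1 hIs.1 (fwd2_le x.1) (fwd2_le y.1) hxy
    obtain ⟨q1, w1⟩ := x; obtain ⟨q2, w2⟩ := y
    simp only at ht hw
    rw [Prod.mk.injEq]
    exact ⟨fwd2_inj ht, hw⟩
  · -- pages in range
    intro u v hadj
    rcases adj_cases H hadj with ⟨i, wx, wy, rfl, rfl, hH⟩ | ⟨i, e, w, rfl, rfl, hi⟩ |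
      ⟨i, e, w, rfl, rfl, hi⟩ | ⟨e, f, w, rfl, rfl, hef⟩
    · rw [page2_mk]; simp only [pageF2, sfun]
      have := hIs.2.1 _ _ hH
      split_ifs <;> omega
    · rw [page2_mk]; simp only [pageF2]; split <;> omega
    · rw [page2_mk]; simp only [pageF2]; split <;> omega
    · have h1 := eidx_lt e; have h2 := eidx_lt f; omega
  · -- no crossings
    intro u v x y h1 h2 hp
    rcases adj_cases H h1 with ⟨i, wx, wy, rfl, rfl, Hxy⟩ | ⟨i, e1, w1, rfl, rfl, hi⟩ |
      ⟨i, e1, w1, rfl, rfl, hi⟩ | ⟨e1, f1, w1, rfl, rfl, hef1⟩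
    · -- edge1 vertical
      rcases adj_cases H h2 with ⟨j, wu, wv, rfl, rfl, Huv⟩ | ⟨j, e2, w2, rfl, rfl, hj⟩ |
        ⟨j, e2, w2, rfl, rfl, hj⟩ | ⟨e2, f2, w2, rfl, rfl, hef2⟩
      · -- V-V
        rw [page2_mk, page2_mk] at hp; simp only [pageF2, sfun] at hp
        have hx := hIs.2.1 _ _ Hxy
        have hu := hIs.2.1 _ _ Huv
        have hpg : pg s(wx, wy) = pg s(wu, wv) := by
          split_ifs at hp <;> omega
        exact vv_core hIs hcb hn1 Hxy Huv hpg (fwd2_le (inl i)) (fwd2_le (inl j))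
      · exact adjpos2 (h2_adjpos fH cb j e2 w2)
      · exact adjpos2 ((h2_adjpos fH cb j e2 w2).symm)
      · have h1' := eidx_lt e2; have h2' := eidx_lt f2; omega
    · exact adjpos1 (h2_adjpos fH cb i e1 w1)
    · exact adjpos1 ((h2_adjpos fH cb i e1 w1).symm)
    · have h1' := eidx_lt e1; have h2' := eidx_lt f1; omega
  · -- matching
    intro u v z h1 h2 hvz
    rcases adj_cases H h1 with ⟨i, a, b, rfl, rfl, H1⟩ | ⟨i, e1, a, rfl, rfl, hi1⟩ |
      ⟨i, e1, a, rfl, rfl, hi1⟩ | ⟨e, f1, a, rfl, rfl, hef1⟩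
    · rcases adj_cases H h2 with ⟨i', a', b2, hu, rfl, H2⟩ | ⟨i', e2, a', hu, rfl, hi2⟩ |
        ⟨i', e2, a', hu, rfl, hi2⟩ | ⟨e', f2, a', hu, rfl, hef2⟩
      · rw [Prod.mk.injEq] at hu
        obtain ⟨hq, rfl⟩ := hu
        obtain rfl := Sum.inl.inj hq
        rw [page2_mk, page2_mk]; simp only [pageF2, sfun]
        have hbb : b ≠ b2 := fun hh => hvz (by rw [hh])
        have hx := hIs.2.1 _ _ H1
        have hu' := hIs.2.1 _ _ H2
        have := hIs.2.2.2 a b b2 H1 H2 hbb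
        intro hpp; split_ifs at hpp <;> omega
      · rw [Prod.mk.injEq] at hu
        obtain ⟨hq, rfl⟩ := hu
        obtain rfl := Sum.inl.inj hq
        rw [page2_mk, page2_mk]; simp only [pageF2, sfun]
        have hx := hIs.2.1 _ _ H1
        intro hpp; split_ifs at hpp <;> omega
      · rw [Prod.mk.injEq] at hu
        exact absurd hu.1 (by simp)
      · rw [Prod.mk.injEq] at hu
        exact absurd hu.1 (by simp)
    · rcases adj_cases H h2 with ⟨i', a', b2, hu, rfl, H2⟩ | ⟨i', e2, a', hu, rfl, hi2⟩ |
        ⟨i', e2, a', hu, rfl, hi2⟩ | ⟨e', f2, a', hu, rfl, hef2⟩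
      · rw [Prod.mk.injEq] at hu
        obtain ⟨hq, rfl⟩ := hu
        obtain rfl := Sum.inl.inj hq
        rw [page2_mk, page2_mk]; simp only [pageF2, sfun]
        have hx := hIs.2.1 _ _ H2
        intro hpp; split_ifs at hpp <;> omega
      · rw [Prod.mk.injEq] at hu
        obtain ⟨hq, rfl⟩ := hu
        obtain rfl := Sum.inl.inj hq
        have he1 := eidx_lt e1; have he2 := eidx_lt e2
        exact absurd (by rw [eidx_inj (show eidx e1 = eidx e2 by omega)]) hvz
      · rw [Prod.mk.injEq] at hu
        exact absurd hu.1 (by simp)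
      · rw [Prod.mk.injEq] at hu
        exact absurd hu.1 (by simp)
    · rcases adj_cases H h2 with ⟨i', a', b2, hu, rfl, H2⟩ | ⟨i', e2, a', hu, rfl, hi2⟩ |
        ⟨i', e2, a', hu, rfl, hi2⟩ | ⟨e', f2, a', hu, rfl, hef2⟩
      · rw [Prod.mk.injEq] at hu
        exact absurd hu.1 (by simp)
      · rw [Prod.mk.injEq] at hu
        exact absurd hu.1 (by simp)
      · rw [Prod.mk.injEq] at hu
        obtain ⟨hq, rfl⟩ := hu
        obtain rfl := Sum.inr.inj hq
        rw [page2_mk, page2_mk]; simp only [pageF2]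
        have hii : i.1 ≠ i'.1 := fun hh => hvz (by rw [Fin.ext hh])
        intro hpp; split_ifs at hpp <;> omega
      · have h1' := eidx_lt e'; have h2' := eidx_lt f2; omega
    · have h1' := eidx_lt e; have h2' := eidx_lt f1; omega

end MBE2

end MBEAux
namespace MBEAux

open SimpleGraph Sum

section Deg

variable {W : Type*} {n : ℕ}

theorem adj_vert (H : SimpleGraph W) (i : Fin n) {w w' : W} (h : H.Adj w w') :
    (FSum .Q (pathG n) H).Adj (inl i, w) (inl i, w') :=
  Or.inl ⟨rfl, ⟨i, rfl⟩, h⟩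

theorem adj_ve (H : SimpleGraph W) {i : Fin n} {e : (pathG n).edgeSet}
    (h : i ∈ (e : Sym2 (Fin n))) (w : W) :
    (FSum .Q (pathG n) H).Adj (inl i, w) (inr e, w) :=
  Or.inr ⟨rfl, h⟩

theorem adj_ee (H : SimpleGraph W) {e f : (pathG n).edgeSet} (hne : e ≠ f) (u : Fin n)
    (h1 : u ∈ (e : Sym2 (Fin n))) (h2 : u ∈ (f : Sym2 (Fin n))) (w : W) :
    (FSum .Q (pathG n) H).Adj (inr e, w) (inr f, w) :=
  Or.inr ⟨rfl, ⟨rfl, hne, u, h1, h2⟩⟩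

/-- A concrete path edge. -/
def pedge (n k : ℕ) (h : k + 1 < n) : (pathG n).edgeSet :=
  ⟨s(⟨k, by omega⟩, ⟨k + 1, h⟩), Or.inl rfl⟩

theorem eidx_pedge (n k : ℕ) (h : k + 1 < n) : eidx (pedge n k h) = k := by
  show min k (k + 1) = k
  omega

theorem lower_v [Fintype W] (H : SimpleGraph W) (i : Fin n) (w0 : W)
    (E : Finset ((pathG n).edgeSet)) (hE : ∀ e ∈ E, i ∈ (e : Sym2 (Fin n))) :
    deg H w0 + E.card ≤ deg (FSum .Q (pathG n) H) (inl i, w0) := by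
  classical
  set A : Set ((Fin n ⊕ (pathG n).edgeSet) × W) :=
    (fun w' => (inl i, w')) '' H.neighborSet w0 with hA'
  set B : Set ((Fin n ⊕ (pathG n).edgeSet) × W) :=
    (fun e => (inr e, w0)) '' (E : Set ((pathG n).edgeSet)) with hB'
  have hAinj : Function.Injective (fun w' : W => ((inl i : Fin n ⊕ (pathG n).edgeSet), w')) :=
    fun a b hab => (Prod.ext_iff.mp hab).2
  have hBinj : Function.Injective
      (fun e : (pathG n).edgeSet => ((inr e : Fin n ⊕ (pathG n).edgeSet), w0)) := by
    intro a b hab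
    have := (Prod.ext_iff.mp hab).1
    exact Sum.inr.inj this
  have hA : A.ncard = deg H w0 := Set.ncard_image_of_injective _ hAinj
  have hB : B.ncard = E.card := by
    rw [hB', Set.ncard_image_of_injective _ hBinj, Set.ncard_coe_finset]
  have hdisj : Disjoint A B := by
    rw [Set.disjoint_left]
    rintro p ⟨w', -, rfl⟩ ⟨f, -, hf⟩
    simp at hf
  have hsub : A ∪ B ⊆ (FSum .Q (pathG n) H).neighborSet (inl i, w0) := by
    rintro p (⟨w', hw', rfl⟩ | ⟨f, hf, rfl⟩)
    · exact adj_vert H i hw'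
    · exact adj_ve H (hE f hf) w0
  calc deg H w0 + E.card = (A ∪ B).ncard := by
        rw [Set.ncard_union_eq hdisj (Set.toFinite _) (Set.toFinite _), hA, hB]
    _ ≤ _ := Set.ncard_le_ncard hsub (Set.toFinite _)

theorem lower_e [Fintype W] (H : SimpleGraph W) (e : (pathG n).edgeSet) (w0 : W)
    (I : Finset (Fin n)) (hI : ∀ i ∈ I, i ∈ (e : Sym2 (Fin n)))
    (F : Finset ((pathG n).edgeSet))
    (hF : ∀ f ∈ F, f ≠ e ∧ ∃ u, u ∈ (e : Sym2 (Fin n)) ∧ u ∈ (f : Sym2 (Fin n))) :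
    I.card + F.card ≤ deg (FSum .Q (pathG n) H) (inr e, w0) := by
  classical
  set A : Set ((Fin n ⊕ (pathG n).edgeSet) × W) :=
    (fun j => (inl j, w0)) '' (I : Set (Fin n)) with hA'
  set B : Set ((Fin n ⊕ (pathG n).edgeSet) × W) :=
    (fun f => (inr f, w0)) '' (F : Set ((pathG n).edgeSet)) with hB'
  have hAinj : Function.Injective (fun j : Fin n => ((inl j : Fin n ⊕ (pathG n).edgeSet), w0)) :=
    fun a b hab => Sum.inl.inj (Prod.ext_iff.mp hab).1
  have hBinj : Function.Injective
      (fun f : (pathG n).edgeSet => ((inr f : Fin n ⊕ (pathG n).edgeSet), w0)) :=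
    fun a b hab => Sum.inr.inj (Prod.ext_iff.mp hab).1
  have hA : A.ncard = I.card := by
    rw [hA', Set.ncard_image_of_injective _ hAinj, Set.ncard_coe_finset]
  have hB : B.ncard = F.card := by
    rw [hB', Set.ncard_image_of_injective _ hBinj, Set.ncard_coe_finset]
  have hdisj : Disjoint A B := by
    rw [Set.disjoint_left]
    rintro p ⟨j, -, rfl⟩ ⟨f, -, hf⟩
    simp at hf
  have hsub : A ∪ B ⊆ (FSum .Q (pathG n) H).neighborSet (inr e, w0) := by
    rintro p (⟨j, hj, rfl⟩ | ⟨f, hf, rfl⟩)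
    · exact ((FSum .Q (pathG n) H).adj_symm (adj_ve H (hI j hj) w0))
    · obtain ⟨hne, u, h1, h2⟩ := hF f hf
      exact adj_ee H (fun hh => hne hh.symm) u h1 h2 w0
  calc I.card + F.card = (A ∪ B).ncard := by
        rw [Set.ncard_union_eq hdisj (Set.toFinite _) (Set.toFinite _), hA, hB]
    _ ≤ _ := Set.ncard_le_ncard hsub (Set.toFinite _)

theorem deg_le_maxDeg {V : Type*} [Fintype V] (G : SimpleGraph V) (x : V) :
    deg G x ≤ maxDeg G :=
  Finset.le_sup (Finset.mem_univ x)

end Deg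

end MBEAux
namespace MBEAux

theorem bool_col (x y : Fin 2) (hxy : x ≠ y) : decide (x = 1) ≠ decide (y = 1) := by
  fin_cases x <;> fin_cases y <;> simp_all

end MBEAux

open SimpleGraph MBEAux Sum in
/-- For `n ≥ 2` and any finite dispersable bipartite graph `H` with at
least one edge, `P_n +_Q H` is dispersable. -/
theorem path_QSum_dispersable (n : ℕ) (hn : 2 ≤ n) {W : Type*} [Fintype W]
    (H : SimpleGraph W) (hHE : H.edgeSet.Nonempty)
    (hbip : H.Colorable 2) (hdisp : mbt H = maxDeg H) (hΔ : 1 ≤ maxDeg H) :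
    mbt (FSum .Q (pathG n) H) = maxDeg (FSum .Q (pathG n) H) := by
  classical
  have hWne : Nonempty W := by
    obtain ⟨e, -⟩ := hHE
    induction e using Sym2.inductionOn with
    | hf a b => exact ⟨a⟩
  obtain ⟨C⟩ := hbip
  have hcb : ∀ {a b : W}, H.Adj a b → (fun w => decide (C w = 1)) a ≠
      (fun w => decide (C w = 1)) b := by
    intro a b hab
    exact bool_col _ _ (C.valid hab)
  have hmemH : mbt H ∈ {k | ∃ f p, IsMBE H k f p} := Nat.sInf_mem (exists_mbe H)
  rw [hdisp] at hmemH
  obtain ⟨fH, pg, hIs⟩ := hmemH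
  obtain ⟨wstar, hwstar⟩ := exists_deg_eq_maxDeg H
  have hmd : maxDeg (FSum .Q (pathG n) H) ≤ mbt (FSum .Q (pathG n) H) := by
    unfold mbt
    apply le_csInf
    · exact exists_mbe (FSum .Q (pathG n) H)
    · rintro k ⟨f, p, hk⟩
      exact maxDeg_le_of_mbe hk
  rcases Nat.lt_or_ge n 3 with hn2 | hn3
  · -- the case n = 2
    have hn2' : n = 2 := by omega
    subst hn2'
    have hcon := mbe2 H fH pg (maxDeg H) hIs hΔ _ hcb
    have hup : mbt (FSum .Q (pathG 2) H) ≤ maxDeg H + 1 := by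
      unfold mbt
      exact Nat.sInf_le ⟨_, _, hcon⟩
    have hlow : maxDeg H + 1 ≤ maxDeg (FSum .Q (pathG 2) H) := by
      have h0 : (0 : ℕ) + 1 < 2 := by omega
      have hE : ∀ e ∈ ({pedge 2 0 h0} : Finset ((pathG 2).edgeSet)),
          (⟨0, by omega⟩ : Fin 2) ∈ (e : Sym2 (Fin 2)) := by
        intro e he
        rw [Finset.mem_singleton] at he
        subst he
        exact Sym2.mem_mk_left _ _
      have h1 := lower_v H (⟨0, by omega⟩ : Fin 2) wstar {pedge 2 0 h0} hE
      rw [Finset.card_singleton, hwstar] at h1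
      exact le_trans h1 (deg_le_maxDeg _ _)
    omega
  · -- the case n ≥ 3
    have hcon := mbe3 H fH pg (maxDeg H) hIs hΔ _ hcb hn3
    have hup : mbt (FSum .Q (pathG n) H) ≤ max (maxDeg H + 2) (min n 4) := by
      unfold mbt
      exact Nat.sInf_le ⟨_, _, hcon⟩
    have h01 : (0 : ℕ) + 1 < n := by omega
    have h12 : (1 : ℕ) + 1 < n := by omega
    have hlow1 : maxDeg H + 2 ≤ maxDeg (FSum .Q (pathG n) H) := by
      have hne01 : pedge n 0 h01 ≠ pedge n 1 h12 := by
        intro hh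
        have := congrArg eidx hh
        rw [eidx_pedge, eidx_pedge] at this
        omega
      have hE : ∀ e ∈ ({pedge n 0 h01, pedge n 1 h12} : Finset ((pathG n).edgeSet)),
          (⟨1, by omega⟩ : Fin n) ∈ (e : Sym2 (Fin n)) := by
        intro e he
        rw [Finset.mem_insert, Finset.mem_singleton] at he
        rcases he with rfl | rfl
        · exact Sym2.mem_mk_right _ _
        · exact Sym2.mem_mk_left _ _
      have h1 := lower_v H (⟨1, by omega⟩ : Fin n) wstar {pedge n 0 h01, pedge n 1 h12} hE
      rw [Finset.card_pair hne01, hwstar] at h1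
      exact le_trans h1 (deg_le_maxDeg _ _)
    have hlow2 : min n 4 ≤ maxDeg (FSum .Q (pathG n) H) := by
      rcases Nat.lt_or_ge n 4 with h4 | h4
      · have := hΔ; omega
      · have h23 : (2 : ℕ) + 1 < n := by omega
        have hI : ∀ j ∈ ({⟨1, by omega⟩, ⟨2, by omega⟩} : Finset (Fin n)),
            j ∈ ((pedge n 1 h12 : (pathG n).edgeSet) : Sym2 (Fin n)) := by
          intro j hj
          rw [Finset.mem_insert, Finset.mem_singleton] at hj
          rcases hj with rfl | rfl
          · exact Sym2.mem_mk_left _ _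
          · exact Sym2.mem_mk_right _ _
        have hF : ∀ f ∈ ({pedge n 0 h01, pedge n 2 h23} : Finset ((pathG n).edgeSet)),
            f ≠ pedge n 1 h12 ∧ ∃ u, u ∈ ((pedge n 1 h12 : (pathG n).edgeSet) : Sym2 (Fin n)) ∧
              u ∈ (f : Sym2 (Fin n)) := by
          intro f hf
          rw [Finset.mem_insert, Finset.mem_singleton] at hf
          rcases hf with rfl | rfl
          · refine ⟨?_, ⟨1, by omega⟩, Sym2.mem_mk_left _ _, Sym2.mem_mk_right _ _⟩
            intro hh
            have := congrArg eidx hh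
            rw [eidx_pedge, eidx_pedge] at this
            omega
          · refine ⟨?_, ⟨2, by omega⟩, Sym2.mem_mk_right _ _, Sym2.mem_mk_left _ _⟩
            intro hh
            have := congrArg eidx hh
            rw [eidx_pedge, eidx_pedge] at this
            omega
        have hcard1 : ({⟨1, by omega⟩, ⟨2, by omega⟩} : Finset (Fin n)).card = 2 := by
          rw [Finset.card_pair]
          simp [Fin.ext_iff]
        have hcard2 : ({pedge n 0 h01, pedge n 2 h23} : Finset ((pathG n).edgeSet)).card = 2 := by
          rw [Finset.card_pair]
          intro hh
          have := congrArg eidx hh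
          rw [eidx_pedge, eidx_pedge] at this
          omega
        have h1 := lower_e H (pedge n 1 h12) wstar _ hI _ hF
        rw [hcard1, hcard2] at h1
        have h2 := le_trans h1 (deg_le_maxDeg (FSum .Q (pathG n) H) (inr (pedge n 1 h12), wstar))
        omega
    have hmax : max (maxDeg H + 2) (min n 4) ≤ maxDeg (FSum .Q (pathG n) H) :=
      max_le hlow1 hlow2
    omega
end

section
/- Let G be a finite k-regular simple graph with mbt(G) = k (i.e., G is regular and dispersable). Then G is bipartite. -/
open SimpleGraph

/-- A finset carrying a fixed-point-free involution has even cardinality. -/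
lemma even_card_of_fpf_involution {α : Type*} [DecidableEq α] :
    ∀ (s : Finset α) (m : α → α), (∀ a ∈ s, m a ∈ s) → (∀ a ∈ s, m (m a) = a) →
    (∀ a ∈ s, m a ≠ a) → Even s.card := by
  intro s
  induction s using Finset.strongInduction with
  | _ s ih =>
    intro m h1 h2 h3
    rcases s.eq_empty_or_nonempty with rfl | ⟨a, ha⟩
    · simp
    · have hma := h1 a ha
      have hne := h3 a ha
      have hsub : ({a, m a} : Finset α) ⊆ s := by
        intro x hx
        simp only [Finset.mem_insert, Finset.mem_singleton] at hx
        rcases hx with rfl | rfl <;> assumption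
      have hss : s \ {a, m a} ⊂ s :=
        Finset.sdiff_ssubset hsub ⟨a, by simp⟩
      have ht : Even (s \ {a, m a}).card := by
        apply ih _ hss m
        · intro b hb
          simp only [Finset.mem_sdiff, Finset.mem_insert, Finset.mem_singleton,
            not_or] at hb ⊢
          obtain ⟨hbs, hb1, hb2⟩ := hb
          refine ⟨h1 b hbs, ?_, ?_⟩
          · intro h; apply hb2; rw [← h2 b hbs, h]
          · intro h; apply hb1; rw [← h2 b hbs, h, h2 a ha]
        · intro b hb; exact h2 b (Finset.mem_sdiff.mp hb).1
        · intro b hb; exact h3 b (Finset.mem_sdiff.mp hb).1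
      have hpair : ({a, m a} : Finset α).card = 2 := Finset.card_pair (Ne.symm hne)
      have hcard : (s \ {a, m a}).card + 2 = s.card := by
        rw [← hpair]; exact Finset.card_sdiff_add_card_eq_card hsub
      obtain ⟨c, hc⟩ := ht
      exact ⟨c + 1, by omega⟩

/-- A finite `k`-regular simple graph with `mbt(G) = k` (a regular
dispersable graph) is bipartite. -/
theorem regular_dispersable_bipartite {V : Type*} [Fintype V] (G : SimpleGraph V)
    (k : ℕ) (hreg : ∀ v : V, deg G v = k) (hdisp : mbt G = k) :
    G.Colorable 2 := by
  classical
  -- Step 1: the set of admissible page numbers is nonempty.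
  have hne : {n | ∃ f page, IsMBE G n f page}.Nonempty := by
    refine ⟨Fintype.card (Sym2 V), fun v => (Fintype.equivFin V v : ℕ),
      fun e => (Fintype.equivFin (Sym2 V) e : ℕ), ?_, ?_, ?_, ?_⟩
    · intro a b hab
      exact (Fintype.equivFin V).injective (Fin.val_injective hab)
    · intro u v _; exact (Fintype.equivFin (Sym2 V) s(u, v)).is_lt
    · intro u v x y _ _ hpq
      have hS : s(u, v) = s(x, y) :=
        (Fintype.equivFin (Sym2 V)).injective (Fin.val_injective hpq)
      rw [Sym2.eq_iff] at hS
      rintro ⟨h1, h2, h3⟩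
      rcases hS with ⟨rfl, rfl⟩ | ⟨rfl, rfl⟩ <;> omega
    · intro u v w _ _ hvw hpq
      have hS : s(u, v) = s(u, w) :=
        (Fintype.equivFin (Sym2 V)).injective (Fin.val_injective hpq)
      exact hvw (Sym2.congr_right.mp hS)
  -- Step 2: extract a matching book embedding on k pages.
  have hmem : mbt G ∈ {n | ∃ f page, IsMBE G n f page} := Nat.sInf_mem hne
  rw [hdisp] at hmem
  obtain ⟨f, page, hinj, hlt, hcross, hmatch⟩ := hmem
  haveI : DecidableRel G.Adj := Classical.decRel _
  have hdeg : ∀ v : V, (G.neighborFinset v).card = k := by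
    intro v
    rw [← hreg v]
    have : (G.neighborSet v).ncard = (G.neighborSet v).toFinset.card :=
      Set.ncard_eq_toFinset_card' _
    simpa [deg, SimpleGraph.neighborFinset] using this.symm
  -- Step 3: at every vertex, every page p < k is used by exactly one edge.
  have hsurj : ∀ (w : V) (p : ℕ), p < k → ∃ w', G.Adj w w' ∧ page s(w, w') = p := by
    intro w p hp
    have hinjOn : Set.InjOn (fun w' => page s(w, w')) (G.neighborFinset w) := by
      intro a ha b hb hab
      by_contra hab'
      exact hmatch w a b (by simpa using ha) (by simpa using hb) hab' hab
    have himg : (G.neighborFinset w).image (fun w' => page s(w, w')) = Finset.range k := by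
      apply Finset.eq_of_subset_of_card_le
      · intro x hx
        simp only [Finset.mem_image, SimpleGraph.mem_neighborFinset] at hx
        obtain ⟨w', hw', rfl⟩ := hx
        exact Finset.mem_range.mpr (hlt w w' hw')
      · rw [Finset.card_range, Finset.card_image_of_injOn hinjOn, hdeg w]
    have : p ∈ (G.neighborFinset w).image (fun w' => page s(w, w')) := by
      rw [himg]; exact Finset.mem_range.mpr hp
    simp only [Finset.mem_image, SimpleGraph.mem_neighborFinset] at this
    obtain ⟨w', hw', hpg⟩ := this
    exact ⟨w', hw', hpg⟩
  -- Step 4: key parity fact for the rank function.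
  have key : ∀ u v, G.Adj u v → f u < f v →
      (Finset.univ.filter (fun w => f w < f v)).card % 2 ≠
      (Finset.univ.filter (fun w => f w < f u)).card % 2 := by
    intro u v huv hfuv
    set p := page s(u, v) with hp
    have hpk : p < k := hlt u v huv
    have hex : ∀ w : V, ∃ w', G.Adj w w' ∧ page s(w, w') = p := fun w => hsurj w p hpk
    set m : V → V := fun w => (hex w).choose with hm
    have hmadj : ∀ w, G.Adj w (m w) := fun w => (hex w).choose_spec.1
    have hmpage : ∀ w, page s(w, m w) = p := fun w => (hex w).choose_spec.2
    have hmuniq : ∀ w w', G.Adj w w' → page s(w, w') = p → w' = m w := by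
      intro w w' hadj hpg
      by_contra hne'
      exact hmatch w w' (m w) hadj (hmadj w) hne' (by rw [hpg, hmpage w])
    have hminv : ∀ w, m (m w) = w := by
      intro w
      refine (hmuniq (m w) w (hmadj w).symm ?_).symm
      rw [Sym2.eq_swap]; exact hmpage w
    set S := Finset.univ.filter (fun w => f u < f w ∧ f w < f v) with hS
    -- the involution preserves S
    have hmS : ∀ w ∈ S, m w ∈ S := by
      intro w hw
      rw [hS, Finset.mem_filter] at hw
      obtain ⟨-, hw1, hw2⟩ := hw
      have hwu : w ≠ u := fun h => by subst h; omega
      have hwv : w ≠ v := fun h => by subst h; omega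
      have h1 : m w ≠ u := by
        intro h
        have hpg := hmpage w
        rw [h] at hpg
        have hadj : G.Adj u w := by
          have := hmadj w; rw [h] at this; exact this.symm
        exact hmatch u w v hadj huv hwv (by rw [Sym2.eq_swap, hpg, hp])
      have h2 : m w ≠ v := by
        intro h
        have hpg := hmpage w
        rw [h] at hpg
        have hadj : G.Adj v w := by
          have := hmadj w; rw [h] at this; exact this.symm
        refine hmatch v w u hadj huv.symm hwu ?_
        rw [Sym2.eq_swap, hpg, hp, Sym2.eq_swap]
      have h3 : ¬ f (m w) < f u := by
        intro hlt'
        refine hcross (m w) w u v (hmadj w).symm huv ?_ ⟨hlt', hw1, hw2⟩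
        rw [Sym2.eq_swap, hmpage w, hp]
      have h4 : ¬ f v < f (m w) := by
        intro hlt'
        refine hcross u v w (m w) huv (hmadj w) ?_ ⟨hw1, hw2, hlt'⟩
        rw [← hp, hmpage w]
      have hfu : f (m w) ≠ f u := fun h => h1 (hinj h)
      have hfv : f (m w) ≠ f v := fun h => h2 (hinj h)
      rw [hS, Finset.mem_filter]
      exact ⟨Finset.mem_univ _, by omega, by omega⟩
    have hmm : ∀ w ∈ S, m (m w) = w := fun w _ => hminv w
    have hfpf : ∀ w ∈ S, m w ≠ w := by
      intro w _ h
      have := hmadj w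
      rw [h] at this
      exact G.loopless.irrefl w this
    have hSeven : Even S.card := even_card_of_fpf_involution S m hmS hmm hfpf
    -- cardinality identity
    have hunotS : u ∉ S := by rw [hS]; simp
    have e1 : (Finset.univ.filter (fun w => f w < f v)) =
        (Finset.univ.filter (fun w => f w < f u)) ∪ insert u S := by
      ext w
      rw [hS]
      simp only [Finset.mem_filter, Finset.mem_union, Finset.mem_insert, Finset.mem_univ,
        true_and]
      constructor
      · intro h
        rcases lt_trichotomy (f w) (f u) with h' | h' | h'
        · exact Or.inl h'
        · exact Or.inr (Or.inl (hinj h'))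
        · exact Or.inr (Or.inr ⟨h', h⟩)
      · rintro (h | rfl | ⟨h1, h2⟩)
        · omega
        · exact hfuv
        · exact h2
    have hdisj : Disjoint (Finset.univ.filter (fun w => f w < f u)) (insert u S) := by
      rw [Finset.disjoint_left]
      intro w hw hw'
      rw [Finset.mem_filter] at hw
      rw [Finset.mem_insert, hS, Finset.mem_filter] at hw'
      rcases hw' with rfl | ⟨-, h1, -⟩ <;> omega
    have hcalc : (Finset.univ.filter (fun w => f w < f v)).card =
        (Finset.univ.filter (fun w => f w < f u)).card + S.card + 1 := by
      rw [e1, Finset.card_union_of_disjoint hdisj, Finset.card_insert_of_notMem hunotS]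
      omega
    obtain ⟨c, hc⟩ := hSeven
    omega
  -- Step 5: color by the parity of the rank in the order.
  refine ⟨SimpleGraph.Coloring.mk
    (fun v => (⟨(Finset.univ.filter (fun w => f w < f v)).card % 2, by omega⟩ : Fin 2)) ?_⟩
  intro x y hxy hcxy
  have hval : (Finset.univ.filter (fun w => f w < f x)).card % 2 =
      (Finset.univ.filter (fun w => f w < f y)).card % 2 := congrArg Fin.val hcxy
  have hfx : f x ≠ f y := fun h => G.ne_of_adj hxy (hinj h)
  rcases lt_or_gt_of_ne hfx with h | h
  · exact key x y hxy h hval.symm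
  · exact key y x hxy.symm h hval
end
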